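/- arXiv:1812.04531 — 2 statements merged into one kernel-verified Lean document; each statement's English description precedes it below -/
import Mathlib

section
/- Let r, p, n be positive integers with p dividing r and let k be a nonnegative integer. Then the ℂ-linear span of {φ_{k+1}(x_d)|_W : d ∈ A_{k+1/2}(r,p,n)} in End(W) equals the centralizer algebra End_{L(r,p,n)}(W) = {F ∈ End(W) : F commutes with the diagonal action of every g ∈ L(r,p,n) on W}. Moreover, φ_{k+1}(x_d)|_W = 0 for every d ∈ A_{k+1/2}(r,p,n) having more than n blocks, and if n ≥ 2k+1 then the family (φ_{k+1}(x_d)|_W)_{d ∈ A_{k+1/2}(r,p,n)} is linearly independent. -/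
open scoped Classical
open Matrix

noncomputable section

namespace Tanabe

/-! ## Tensor space model of `V^{⊗k}` for `V = ℂ^n`.
A tensor is encoded by its coordinates, i.e. a function `(Fin k → Fin n) → ℂ`;
the basis vector `v_{i_1} ⊗ ⋯ ⊗ v_{i_k}` corresponds to the indicator function
of the tuple `(i_1, …, i_k)`. -/

abbrev TP (n k : ℕ) : Type := (Fin k → Fin n) → ℂ

/-- The linear endomorphism of `V^{⊗k}` with matrix `K` in the standard basis:
it sends the basis vector indexed by the tuple `i` to `∑ₒ K o i • (basis vector o)`. -/
def kernelMap (n k : ℕ) (K : (Fin k → Fin n) → (Fin k → Fin n) → ℂ) :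
    TP n k →ₗ[ℂ] TP n k where
  toFun f := fun o => ∑ i : Fin k → Fin n, K o i * f i
  map_add' f g := by
    funext o
    simp only [Pi.add_apply, mul_add]
    exact Finset.sum_add_distrib
  map_smul' c f := by
    funext o
    simp only [Pi.smul_apply, smul_eq_mul, RingHom.id_apply]
    rw [Finset.mul_sum]
    exact Finset.sum_congr rfl fun i _ => by ring

/-- The diagonal (tensor-power) action `g^{⊗k}` of a matrix `g` on `V^{⊗k}`. -/
def tensorPow (n k : ℕ) (g : Matrix (Fin n) (Fin n) ℂ) : TP n k →ₗ[ℂ] TP n k :=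
  kernelMap n k fun o i => ∏ t : Fin k, g (o t) (i t)

/-! ## Set partitions of `{1,…,t,1′,…,t′}`.
A set partition of `{1,…,t,1′,…,t′}` is encoded as a `Setoid` on `Fin t ⊕ Fin t`,
with `Sum.inl` the unprimed (top row) elements and `Sum.inr` the primed (bottom row)
elements; blocks are the equivalence classes. -/

abbrev SP (t : ℕ) : Type := Setoid (Fin t ⊕ Fin t)

/-- `N(B)`: number of top-row (unprimed) elements in the block `q` of `d`. -/
def topCt {t : ℕ} (d : SP t) (q : Quotient d) : ℕ :=
  Nat.card {a : Fin t // Quotient.mk d (Sum.inl a) = q}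

/-- `M(B)`: number of bottom-row (primed) elements in the block `q` of `d`. -/
def botCt {t : ℕ} (d : SP t) (q : Quotient d) : ℕ :=
  Nat.card {a : Fin t // Quotient.mk d (Sum.inr a) = q}

/-- `|d|`: the number of blocks of `d`. -/
def nBlocks {t : ℕ} (d : SP t) : ℕ := Nat.card (Quotient d)

/-- Coefficient of `φ_t(x_d)`: equals `1` if the equalities among the values of the
combined tuple `c` are *exactly* those prescribed by `d`, and `0` otherwise. -/
def coeX (n t : ℕ) (d : SP t) (c : Fin t ⊕ Fin t → Fin n) : ℂ :=
  if ∀ a b : Fin t ⊕ Fin t, d.r a b ↔ c a = c b then 1 else 0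

/-- Coefficient of `φ_t(d)` (the diagram basis): equals `1` if the values of the
combined tuple `c` agree on each block of `d`, and `0` otherwise. -/
def coeD (n t : ℕ) (d : SP t) (c : Fin t ⊕ Fin t → Fin n) : ℂ :=
  if ∀ a b : Fin t ⊕ Fin t, d.r a b → c a = c b then 1 else 0

/-- The operator `φ_t(x_d)` on `V^{⊗t}`. -/
def phiX (n t : ℕ) (d : SP t) : TP n t →ₗ[ℂ] TP n t :=
  kernelMap n t fun o i => coeX n t d (Sum.elim i o)

/-- The operator `φ_t(d)` on `V^{⊗t}` (diagram basis). -/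
def phiD (n t : ℕ) (d : SP t) : TP n t →ₗ[ℂ] TP n t :=
  kernelMap n t fun o i => coeD n t d (Sum.elim i o)

/-- `d ∈ Π_t(r)` : every block `B` satisfies `N(B) ≡ M(B) (mod r)`. -/
def inPi (r : ℕ) {t : ℕ} (d : SP t) : Prop :=
  ∀ q : Quotient d, (topCt d q : ℤ) ≡ (botCt d q : ℤ) [ZMOD (r : ℤ)]

/-- `d ∈ Λ_t(r,p,n)` (here `m = r/p`). -/
def inLambda (r p n : ℕ) {t : ℕ} (d : SP t) : Prop :=
  nBlocks d = n ∧
  (∀ q : Quotient d,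
    ((topCt d q : ℤ) ≡ (botCt d q : ℤ) [ZMOD ((r / p : ℕ) : ℤ)]) ∧
    ¬ ((topCt d q : ℤ) ≡ (botCt d q : ℤ) [ZMOD (r : ℤ)])) ∧
  (∀ q q' : Quotient d,
    (topCt d q : ℤ) - (botCt d q : ℤ) ≡ (topCt d q' : ℤ) - (botCt d q' : ℤ) [ZMOD (r : ℤ)])

/-- `d ∈ Θ_t(r,p,n)` (here `m = r/p`). -/
def inTheta (r p n : ℕ) {t : ℕ} (d : SP t) : Prop :=
  n < nBlocks d ∧
  (∀ q : Quotient d, (topCt d q : ℤ) ≡ (botCt d q : ℤ) [ZMOD ((r / p : ℕ) : ℤ)]) ∧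
  ∃ q : Quotient d, ¬ ((topCt d q : ℤ) ≡ (botCt d q : ℤ) [ZMOD (r : ℤ)])

/-- `d ∈ A_t(r,p,n) = Π_t(r) ∪ Λ_t(r,p,n) ∪ Θ_t(r,p,n)`. -/
def inA (r p n : ℕ) {t : ℕ} (d : SP t) : Prop :=
  inPi r d ∨ inLambda r p n d ∨ inTheta r p n d

/-- `d ∈ A_{k+1/2}` : `k+1` and `(k+1)′` lie in the same block. -/
def isHalf (k : ℕ) (d : SP (k + 1)) : Prop :=
  d.r (Sum.inl (Fin.last k)) (Sum.inr (Fin.last k))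

/-- `d ∈ Π_t(r,p,n)` : `d ∈ A_t(r,p,n)` with at most `n` blocks. -/
def inPiRPN (r p n : ℕ) {t : ℕ} (d : SP t) : Prop :=
  inA r p n d ∧ nBlocks d ≤ n

/-- `{φ_k(x_d) : d ∈ A_k(r,p,n)}`. -/
def TanSet (r p n k : ℕ) : Set (TP n k →ₗ[ℂ] TP n k) :=
  {T | ∃ d : SP k, inA r p n d ∧ T = phiX n k d}

/-- `{φ_{k+1}(x_d) : d ∈ A_{k+1/2}(r,p,n)}` (as endomorphisms of `V^{⊗(k+1)}`). -/
def TanSetHalf (r p n k : ℕ) : Set (TP n (k + 1) →ₗ[ℂ] TP n (k + 1)) :=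
  {T | ∃ d : SP (k + 1), (inA r p n d ∧ isHalf k d) ∧ T = phiX n (k + 1) d}

/-! ## The groups `G(r,p,n)` and `L(r,p,n)` as matrix groups. -/

/-- The monomial matrix with underlying permutation `π` and weights `a` :
its `(i,j)` entry is `a j` if `i = π j` and `0` otherwise, so that it maps
`v_j ↦ a j • v_{π j}`. -/
def monoMat (n : ℕ) (π : Equiv.Perm (Fin n)) (a : Fin n → ℂ) :
    Matrix (Fin n) (Fin n) ℂ :=
  Matrix.of fun i j => if i = π j then a j else 0

/-- `G(r,p,n)` as a set of matrices: matrices with exactly one nonzero entry in each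
row and column, whose nonzero entries are `r`-th roots of unity, and such that the
`m = r/p`-th power of the product of the nonzero entries is `1`. -/
def GSet (r p n : ℕ) : Set (Matrix (Fin n) (Fin n) ℂ) :=
  {g | ∃ (π : Equiv.Perm (Fin n)) (a : Fin n → ℂ),
    (∀ i, a i ^ r = 1) ∧ (∏ i, a i) ^ (r / p) = 1 ∧ g = monoMat n π a}

/-- The last index of `Fin n` (position `n` in 1-indexed notation). -/
def lastIdx (n : ℕ) (hn : 0 < n) : Fin n := ⟨n - 1, by omega⟩

/-- `L(r,p,n)` as a set of matrices: elements of `G(r,p,n)` whose `(n,n)` entry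
is nonzero. -/
def LSet (r p n : ℕ) (hn : 0 < n) : Set (Matrix (Fin n) (Fin n) ℂ) :=
  {g | g ∈ GSet r p n ∧ g (lastIdx n hn) (lastIdx n hn) ≠ 0}

/-- The centralizer algebra `End_{G(r,p,n)}(V^{⊗k})`. -/
def centG (r p n k : ℕ) : Set (TP n k →ₗ[ℂ] TP n k) :=
  {F | ∀ g ∈ GSet r p n, F ∘ₗ tensorPow n k g = tensorPow n k g ∘ₗ F}

/-- The subspace `W = V^{⊗k} ⊗ ℂ v_n` of `V^{⊗(k+1)}` : coordinate functions
supported on tuples whose last entry is the last index. -/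
def Wsub (n k : ℕ) (hn : 0 < n) : Submodule ℂ (TP n (k + 1)) where
  carrier := {f | ∀ j : Fin (k + 1) → Fin n, j (Fin.last k) ≠ lastIdx n hn → f j = 0}
  add_mem' := by
    intro a b ha hb j hj
    simp [Pi.add_apply, ha j hj, hb j hj]
  zero_mem' := by intro j hj; rfl
  smul_mem' := by
    intro c a ha j hj
    simp [Pi.smul_apply, ha j hj]


/-! ## Group structure -/

abbrev GLn (n : ℕ) := Matrix.GeneralLinearGroup (Fin n) ℂ

lemma monoMat_mul (n : ℕ) (π σ : Equiv.Perm (Fin n)) (a b : Fin n → ℂ) :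
    monoMat n π a * monoMat n σ b = monoMat n (π * σ) (fun j => a (σ j) * b j) := by
  ext i j
  simp only [monoMat, Matrix.mul_apply, Matrix.of_apply, mul_ite, mul_zero, ite_mul, zero_mul]
  rw [Finset.sum_ite_eq' Finset.univ (σ j)]
  simp [Equiv.Perm.mul_apply]
  congr

lemma monoMat_one (n : ℕ) : monoMat n 1 (fun _ => (1 : ℂ)) = 1 := by
  ext i j
  simp [monoMat, Matrix.one_apply]
  congr

lemma one_mem_GSet (r p n : ℕ) : (1 : Matrix (Fin n) (Fin n) ℂ) ∈ GSet r p n :=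
  ⟨1, fun _ => 1, fun _ => one_pow r, by simp, (monoMat_one n).symm⟩

lemma mul_mem_GSet {r p n : ℕ} {g h : Matrix (Fin n) (Fin n) ℂ}
    (hg : g ∈ GSet r p n) (hh : h ∈ GSet r p n) : g * h ∈ GSet r p n := by
  obtain ⟨π, a, ha, hpa, rfl⟩ := hg
  obtain ⟨σ, b, hb, hpb, rfl⟩ := hh
  refine ⟨π * σ, fun j => a (σ j) * b j, fun i => by rw [mul_pow, ha, hb, one_mul], ?_,
    monoMat_mul n π σ a b⟩
  have h1 : (∏ i, (a (σ i) * b i)) = (∏ i, a i) * ∏ i, b i := by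
    rw [Finset.prod_mul_distrib, Equiv.prod_comp σ a]
  rw [h1, mul_pow, hpa, hpb, one_mul]

lemma a_ne_zero {r : ℕ} (hr : 0 < r) {a : ℂ} (ha : a ^ r = 1) : a ≠ 0 := by
  intro h0
  rw [h0, zero_pow hr.ne'] at ha
  exact zero_ne_one ha

lemma monoMat_mul_inv (n : ℕ) (π : Equiv.Perm (Fin n)) (a : Fin n → ℂ)
    (ha : ∀ i, a i ≠ 0) :
    monoMat n π a * monoMat n π⁻¹ (fun j => (a (π⁻¹ j))⁻¹) = 1 := by
  simp only [monoMat_mul]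
  rw [mul_inv_cancel,
    show (fun j => a (π⁻¹ j) * (a (π⁻¹ j))⁻¹) = fun _ : Fin n => (1 : ℂ) from
      funext fun j => mul_inv_cancel₀ (ha _),
    monoMat_one]

/-- The value of the inverse of a unit whose underlying matrix is a monomial matrix. -/
lemma gl_inv_val {n : ℕ} (g : GLn n) (π : Equiv.Perm (Fin n)) (a : Fin n → ℂ)
    (ha : ∀ i, a i ≠ 0) (hg : (↑g : Matrix (Fin n) (Fin n) ℂ) = monoMat n π a) :
    (↑g⁻¹ : Matrix (Fin n) (Fin n) ℂ) = monoMat n π⁻¹ (fun j => (a (π⁻¹ j))⁻¹) := by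
  have hmul : (↑g : Matrix (Fin n) (Fin n) ℂ) *
      monoMat n π⁻¹ (fun j => (a (π⁻¹ j))⁻¹) = 1 := by
    rw [hg]; exact monoMat_mul_inv n π a ha
  calc (↑g⁻¹ : Matrix (Fin n) (Fin n) ℂ)
      = ↑g⁻¹ * ((↑g : Matrix (Fin n) (Fin n) ℂ) *
          monoMat n π⁻¹ (fun j => (a (π⁻¹ j))⁻¹)) := by rw [hmul, mul_one]
    _ = ((↑g⁻¹ : Matrix (Fin n) (Fin n) ℂ) * ↑g) *
          monoMat n π⁻¹ (fun j => (a (π⁻¹ j))⁻¹) := by rw [mul_assoc]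
    _ = monoMat n π⁻¹ (fun j => (a (π⁻¹ j))⁻¹) := by
          rw [← Units.val_mul, inv_mul_cancel, Units.val_one, one_mul]

lemma inv_mem_GSet {r p n : ℕ} (hr : 0 < r) {g : GLn n}
    (hg : (↑g : Matrix (Fin n) (Fin n) ℂ) ∈ GSet r p n) :
    (↑g⁻¹ : Matrix (Fin n) (Fin n) ℂ) ∈ GSet r p n := by
  obtain ⟨π, a, ha, hpa, hgm⟩ := hg
  have hane : ∀ i, a i ≠ 0 := fun i => a_ne_zero hr (ha i)
  refine ⟨π⁻¹, fun j => (a (π⁻¹ j))⁻¹, fun i => by rw [inv_pow, ha, inv_one], ?_,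
    gl_inv_val g π a hane hgm⟩
  rw [Finset.prod_inv_distrib, Equiv.prod_comp π⁻¹ a, inv_pow, hpa, inv_one]

/-- The complex reflection group `G(r,p,n)` as a subgroup of `GL_n(ℂ)`. -/
def GGroup (r p n : ℕ) (hr : 0 < r) : Subgroup (GLn n) where
  carrier := {g | (↑g : Matrix (Fin n) (Fin n) ℂ) ∈ GSet r p n}
  one_mem' := by
    show (↑(1 : GLn n) : Matrix (Fin n) (Fin n) ℂ) ∈ GSet r p n
    rw [Units.val_one]; exact one_mem_GSet r p n
  mul_mem' := by
    intro g h hg hh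
    show (↑(g * h) : Matrix (Fin n) (Fin n) ℂ) ∈ GSet r p n
    rw [Units.val_mul]; exact mul_mem_GSet hg hh
  inv_mem' := by
    intro g hg
    exact inv_mem_GSet hr hg

lemma monoMat_last {n : ℕ} (hn : 0 < n) (π : Equiv.Perm (Fin n)) (a : Fin n → ℂ)
    (h : monoMat n π a (lastIdx n hn) (lastIdx n hn) ≠ 0) :
    π (lastIdx n hn) = lastIdx n hn ∧ a (lastIdx n hn) ≠ 0 := by
  by_cases hp : lastIdx n hn = π (lastIdx n hn)
  · refine ⟨hp.symm, ?_⟩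
    intro h0
    apply h
    simp [monoMat, ← hp, h0]
  · exfalso; apply h; simp [monoMat, hp]

lemma monoMat_last_entry {n : ℕ} (hn : 0 < n) (π : Equiv.Perm (Fin n)) (a : Fin n → ℂ)
    (hp : π (lastIdx n hn) = lastIdx n hn) :
    monoMat n π a (lastIdx n hn) (lastIdx n hn) = a (lastIdx n hn) := by
  simp [monoMat, hp]

/-- The subgroup `L(r,p,n)` of `G(r,p,n)` (matrices with nonzero `(n,n)` entry). -/
def LGroup (r p n : ℕ) (hr : 0 < r) (hn : 0 < n) : Subgroup (GLn n) where
  carrier := {g | (↑g : Matrix (Fin n) (Fin n) ℂ) ∈ LSet r p n hn}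
  one_mem' := by
    refine ⟨?_, ?_⟩
    · show (↑(1 : GLn n) : Matrix (Fin n) (Fin n) ℂ) ∈ GSet r p n
      rw [Units.val_one]; exact one_mem_GSet r p n
    · rw [Units.val_one]
      simp [Matrix.one_apply]
  mul_mem' := by
    rintro g h ⟨hg, hge⟩ ⟨hh, hhe⟩
    refine ⟨?_, ?_⟩
    · show (↑(g * h) : Matrix (Fin n) (Fin n) ℂ) ∈ GSet r p n
      rw [Units.val_mul]; exact mul_mem_GSet hg hh
    · obtain ⟨π, a, ha, hpa, hgm⟩ := hg
      obtain ⟨σ, b, hb, hpb, hhm⟩ := hh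
      rw [hgm] at hge
      rw [hhm] at hhe
      obtain ⟨hπ, ha0⟩ := monoMat_last hn π a hge
      obtain ⟨hσ, hb0⟩ := monoMat_last hn σ b hhe
      rw [Units.val_mul, hgm, hhm, monoMat_mul]
      rw [monoMat_last_entry hn _ _ (by simp [Equiv.Perm.mul_apply, hσ, hπ])]
      simp only [hσ]
      exact mul_ne_zero ha0 hb0
  inv_mem' := by
    rintro g ⟨hg, hge⟩
    obtain ⟨π, a, ha, hpa, hgm⟩ := hg
    have hane : ∀ i, a i ≠ 0 := fun i => a_ne_zero hr (ha i)
    rw [hgm] at hge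
    obtain ⟨hπ, ha0⟩ := monoMat_last hn π a hge
    refine ⟨inv_mem_GSet hr ⟨π, a, ha, hpa, hgm⟩, ?_⟩
    rw [gl_inv_val g π a hane hgm]
    have hπi : π⁻¹ (lastIdx n hn) = lastIdx n hn := by
      conv_lhs => rw [← hπ]
      simp
    rw [monoMat_last_entry hn _ _ hπi]
    simp only [hπi]
    exact inv_ne_zero ha0

lemma GGroup_le (r p n : ℕ) (hr : 0 < r) : GGroup r p n hr ≤ GGroup r 1 n hr := by
  rintro g ⟨π, a, ha, hpa, hgm⟩
  refine ⟨π, a, ha, ?_, hgm⟩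
  rw [Nat.div_one, ← Finset.prod_pow]
  simp [ha]

lemma LGroup_le (r p n : ℕ) (hr : 0 < r) (hn : 0 < n) :
    LGroup r p n hr hn ≤ LGroup r 1 n hr hn := by
  rintro g ⟨hg, hge⟩
  exact ⟨GGroup_le r p n hr hg, hge⟩

lemma LGroup_le_GGroup (r p n : ℕ) (hr : 0 < r) (hn : 0 < n) :
    LGroup r p n hr hn ≤ GGroup r p n hr := fun _ hg => hg.1

lemma LGroup_le_G1 (r p n : ℕ) (hr : 0 < r) (hn : 0 < n) :
    LGroup r p n hr hn ≤ GGroup r 1 n hr :=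
  le_trans (LGroup_le_GGroup r p n hr hn) (GGroup_le r p n hr)

/-! ## Representation-theoretic notions -/

section Reps

variable {G : Type*} [Monoid G] {V : Type*} [AddCommGroup V] [Module ℂ V]

/-- A submodule invariant under a representation. -/
def RepInvariant (ρ : Representation ℂ G V) (q : Submodule ℂ V) : Prop :=
  ∀ (g : G), ∀ v ∈ q, ρ g v ∈ q

/-- Irreducibility of a representation. -/
def RepIrreducible (ρ : Representation ℂ G V) : Prop :=
  Nontrivial V ∧ ∀ q : Submodule ℂ V, RepInvariant ρ q → q = ⊥ ∨ q = ⊤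

/-- Irreducibility of an invariant subspace, as a subrepresentation. -/
def SubIrreducible (ρ : Representation ℂ G V) (q : Submodule ℂ V) : Prop :=
  q ≠ ⊥ ∧ ∀ q' : Submodule ℂ V, q' ≤ q → RepInvariant ρ q' → q' = ⊥ ∨ q' = q

/-- Two (invariant) subspaces are isomorphic as subrepresentations: there is a
`ℂ`-linear equivalence between them intertwining the action. -/
def IsSubrepIso (ρ : Representation ℂ G V) (q q' : Submodule ℂ V) : Prop :=
  ∃ e : q ≃ₗ[ℂ] q', ∀ (g : G) (x : V) (hx : x ∈ q) (hgx : ρ g x ∈ q),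
    ((e ⟨ρ g x, hgx⟩ : q') : V) = ρ g ((e ⟨x, hx⟩ : q') : V)

/-- A representation is multiplicity free: it is an (internal) direct sum of
pairwise non-isomorphic irreducible subrepresentations. -/
def RepMultFree (ρ : Representation ℂ G V) : Prop :=
  ∃ (ι : Type) (_ : Fintype ι) (W : ι → Submodule ℂ V),
    (∀ i, RepInvariant ρ (W i)) ∧
    (∀ i, SubIrreducible ρ (W i)) ∧
    iSupIndep W ∧ (⨆ i, W i) = ⊤ ∧
    (∀ i j, i ≠ j → ¬ IsSubrepIso ρ (W i) (W j))

/-- Restriction of a representation of `K` to a subgroup `H ≤ K`. -/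
def restrictRep {G : Type*} [Group G] {H K : Subgroup G} (h : H ≤ K)
    (ρ : Representation ℂ ↥K V) : Representation ℂ ↥H V :=
  MonoidHom.comp ρ (Subgroup.inclusion h)

end Reps

/-! ## The elements `ζ_i^l ζ_j^{-l} s_{ij}` and the central elements `κ` -/

/-- `ζ = exp(2πi/r)`, a primitive `r`-th root of unity. -/
def zeta (r : ℕ) : ℂ := Complex.exp (2 * Real.pi * Complex.I / r)

lemma zeta_pow_self {r : ℕ} (hr : 0 < r) : zeta r ^ r = 1 := by
  rw [zeta, ← Complex.exp_nat_mul]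
  rw [show (r : ℂ) * (2 * Real.pi * Complex.I / r) = 2 * Real.pi * Complex.I by
    rw [mul_div_assoc']
    exact mul_div_cancel_left₀ _ (Nat.cast_ne_zero.mpr hr.ne')]
  exact Complex.exp_two_pi_mul_I

lemma zeta_ne_zero (r : ℕ) : zeta r ≠ 0 := Complex.exp_ne_zero _

/-- Weights of the monomial matrix `ζ_i^l ζ_j^{-l} s_{ij}` : `ζ^l` in position `i`,
`ζ^{-l}` in position `j`, `1` elsewhere. -/
def zijWt (r l : ℕ) {n : ℕ} (i j : Fin n) : Fin n → ℂ :=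
  fun t => if t = i then zeta r ^ l else if t = j then (zeta r ^ l)⁻¹ else 1

/-- The matrix `ζ_i^l ζ_j^{-l} s_{ij}`. -/
def zijMat (n r l : ℕ) (i j : Fin n) : Matrix (Fin n) (Fin n) ℂ :=
  monoMat n (Equiv.swap i j) (zijWt r l i j)

lemma zijWt_ne_zero (r l : ℕ) {n : ℕ} (i j : Fin n) (t : Fin n) :
    zijWt r l i j t ≠ 0 := by
  unfold zijWt
  split_ifs
  · exact pow_ne_zero _ (zeta_ne_zero r)
  · exact inv_ne_zero (pow_ne_zero _ (zeta_ne_zero r))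
  · exact one_ne_zero

lemma zijWt_pow {r l : ℕ} (hr : 0 < r) {n : ℕ} (i j : Fin n) (t : Fin n) :
    zijWt r l i j t ^ r = 1 := by
  unfold zijWt
  split_ifs
  · rw [← pow_mul, mul_comm, pow_mul, zeta_pow_self hr, one_pow]
  · rw [inv_pow, ← pow_mul, mul_comm, pow_mul, zeta_pow_self hr, one_pow, inv_one]
  · exact one_pow r

lemma zijWt_prod {r l : ℕ} {n : ℕ} {i j : Fin n} (hij : i ≠ j) :
    (∏ t, zijWt r l i j t) = 1 := by
  have hfun : (fun t => zijWt r l i j t) =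
      fun t => (if t = i then zeta r ^ l else 1) * (if t = j then (zeta r ^ l)⁻¹ else 1) := by
    funext t
    by_cases h1 : t = i <;> by_cases h2 : t = j
    · exact absurd (h1.symm.trans h2) hij
    · simp [zijWt, h1, h2, hij]
    · simp [zijWt, h1, h2, hij, Ne.symm hij]
    · simp [zijWt, h1, h2]
  rw [hfun, Finset.prod_mul_distrib, Finset.prod_ite_eq' Finset.univ i,
    Finset.prod_ite_eq' Finset.univ j]
  simp [mul_inv_cancel₀ (pow_ne_zero l (zeta_ne_zero r))]

lemma zij_mem_GSet (r p n l : ℕ) (hr : 0 < r) (i j : Fin n) (hij : i ≠ j) :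
    zijMat n r l i j ∈ GSet r p n := by
  refine ⟨Equiv.swap i j, zijWt r l i j, zijWt_pow hr i j, ?_, rfl⟩
  rw [zijWt_prod hij, one_pow]

/-- A monomial matrix with nonzero weights, as an element of `GL_n(ℂ)`. -/
def monoUnit (n : ℕ) (π : Equiv.Perm (Fin n)) (a : Fin n → ℂ) (ha : ∀ i, a i ≠ 0) :
    GLn n where
  val := monoMat n π a
  inv := monoMat n π⁻¹ (fun j => (a (π⁻¹ j))⁻¹)
  val_inv := monoMat_mul_inv n π a ha
  inv_val := by
    simp only [monoMat_mul]
    rw [inv_mul_cancel,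
      show (fun j => (a (π⁻¹ (π j)))⁻¹ * a j) = fun _ : Fin n => (1 : ℂ) from
        funext fun j => by rw [show π⁻¹ (π j) = j from π.symm_apply_apply j, inv_mul_cancel₀ (ha _)],
      monoMat_one]

/-- The element `ζ_i^l ζ_j^{-l} s_{ij}` of `G(r,p,n)`. -/
def zijG (r p n l : ℕ) (hr : 0 < r) (i j : Fin n) (hij : i ≠ j) : ↥(GGroup r p n hr) :=
  ⟨monoUnit n (Equiv.swap i j) (zijWt r l i j) (zijWt_ne_zero r l i j),
   zij_mem_GSet r p n l hr i j hij⟩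

/-- The element `κ_{r,n} = (1/r)·Σ_{l<r} Σ_{i<j} ζ_i^l ζ_j^{-l} s_{ij}` of the group
algebra `ℂ[G(r,p,n)]`. -/
def kappaGA (r p n : ℕ) (hr : 0 < r) : MonoidAlgebra ℂ ↥(GGroup r p n hr) :=
  (1 / (r : ℂ)) • ∑ l ∈ Finset.range r, ∑ i : Fin n, ∑ j : Fin n,
    if h : i < j then MonoidAlgebra.single (zijG r p n l hr i j h.ne) 1 else 0

lemma zijL_last (r l : ℕ) {n : ℕ} (hn : 0 < n) (i j : Fin n)
    (hi : i ≠ lastIdx n hn) (hj : j ≠ lastIdx n hn) :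
    zijMat n r l i j (lastIdx n hn) (lastIdx n hn) ≠ 0 := by
  have hswap : Equiv.swap i j (lastIdx n hn) = lastIdx n hn :=
    Equiv.swap_apply_of_ne_of_ne (Ne.symm hi) (Ne.symm hj)
  rw [zijMat, monoMat_last_entry hn _ _ hswap]
  exact zijWt_ne_zero r l i j _

/-- The element `ζ_i^l ζ_j^{-l} s_{ij}` of `L(r,p,n)`, for `i, j ≤ n-1`. -/
def zijL (r p n l : ℕ) (hr : 0 < r) (hn : 0 < n) (i j : Fin n) (hij : i ≠ j)
    (hi : i ≠ lastIdx n hn) (hj : j ≠ lastIdx n hn) : ↥(LGroup r p n hr hn) :=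
  ⟨monoUnit n (Equiv.swap i j) (zijWt r l i j) (zijWt_ne_zero r l i j),
   ⟨zij_mem_GSet r p n l hr i j hij, zijL_last r l hn i j hi hj⟩⟩

/-- The element `κ_{r,n-1} = (1/r)·Σ_{l<r} Σ_{1≤i<j≤n-1} ζ_i^l ζ_j^{-l} s_{ij}` of the
group algebra `ℂ[L(r,p,n)]`. -/
def kappaLA (r p n : ℕ) (hr : 0 < r) (hn : 0 < n) :
    MonoidAlgebra ℂ ↥(LGroup r p n hr hn) :=
  (1 / (r : ℂ)) • ∑ l ∈ Finset.range r, ∑ i : Fin n, ∑ j : Fin n,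
    if h : i < j ∧ (j : ℕ) < n - 1 then
      MonoidAlgebra.single
        (zijL r p n l hr hn i j h.1.ne
          (by
            refine Fin.ne_of_val_ne ?_
            have h1 : (i : ℕ) < (j : ℕ) := h.1
            have h2 : (j : ℕ) < n - 1 := h.2
            show (i : ℕ) ≠ n - 1
            omega)
          (by
            refine Fin.ne_of_val_ne ?_
            have h2 : (j : ℕ) < n - 1 := h.2
            show (j : ℕ) ≠ n - 1
            omega)) 1
    else 0

/-! ## The induced representation of statement on `Ind_L^G σ` -/

/-- The right regular representation of a group `G` on the space of functions
`G → ℂ`, given by `(x · f)(g) = f(g x)`. -/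
def regRep (G : Type*) [Group G] : Representation ℂ G (G → ℂ) where
  toFun x :=
    { toFun := fun f => fun g => f (g * x)
      map_add' := fun f g => rfl
      map_smul' := fun c f => rfl }
  map_one' := by
    refine LinearMap.ext fun f => ?_
    funext g
    simp
  map_mul' x y := by
    refine LinearMap.ext fun f => ?_
    funext g
    simp [Module.End.mul_apply, mul_assoc]

/-- The space of functions `f : G(r,p,n) → ℂ` with `f(hg) = σ(h)·f(g)` for all
`h ∈ L(r,p,n)`, where `σ(h)` is the `(n,n)` entry of `h`. -/
def IndSig (r p n : ℕ) (hr : 0 < r) (hn : 0 < n) :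
    Submodule ℂ (↥(GGroup r p n hr) → ℂ) where
  carrier := {f | ∀ h g : ↥(GGroup r p n hr),
    ((h : GLn n) : Matrix (Fin n) (Fin n) ℂ) ∈ LSet r p n hn →
    f (h * g) = ((h : GLn n) : Matrix (Fin n) (Fin n) ℂ) (lastIdx n hn) (lastIdx n hn) * f g}
  add_mem' := by
    intro a b ha hb h g hh
    simp [ha h g hh, hb h g hh, mul_add]
  zero_mem' := by intro h g hh; simp
  smul_mem' := by
    intro c a ha h g hh
    simp [ha h g hh]
    ring

lemma IndSig_invariant (r p n : ℕ) (hr : 0 < r) (hn : 0 < n) :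
    RepInvariant (regRep ↥(GGroup r p n hr)) (IndSig r p n hr hn) := by
  intro x f hf h g hh
  show f ((h * g) * x) = _ * f (g * x)
  rw [mul_assoc]
  exact hf h (g * x) hh

/-- The natural representation of `G(r,p,n)` on `ℂ^n` by matrix-vector
multiplication. -/
def natRep (r p n : ℕ) (hr : 0 < r) : Representation ℂ ↥(GGroup r p n hr) (Fin n → ℂ) where
  toFun g := Matrix.mulVecLin ((g : GLn n) : Matrix (Fin n) (Fin n) ℂ)
  map_one' := by
    simp only [OneMemClass.coe_one, Units.val_one, Matrix.mulVecLin_one]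
    rfl
  map_mul' g h := by
    simp only [Subgroup.coe_mul, Units.val_mul, Matrix.mulVecLin_mul]
    rw [Module.End.mul_eq_comp]

/-! ## The operators `Z_{t,r}` and `Z_{t+1/2,r}` -/

/-- `S ∪ S′` as a finite subset of `Fin t ⊕ Fin t`. -/
def SSfin {t : ℕ} (S : Finset (Fin t)) : Finset (Fin t ⊕ Fin t) :=
  Finset.univ.filter fun x => Sum.elim (· ∈ S) (· ∈ S) x

/-- The set partition `b_S` with blocks `S ∪ S′` and `{l,l′}` for `l ∉ S`. -/
def bS {t : ℕ} (S : Finset (Fin t)) : SP t :=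
  Setoid.ker fun x : Fin t ⊕ Fin t =>
    if x ∈ SSfin S then (none : Option (Fin t ⊕ Fin t)) else some x

/-- The set partition `d_I` with blocks `I`, `(S ∪ S′) \ I` and `{l,l′}` for `l ∉ S`. -/
def dI {t : ℕ} (S : Finset (Fin t)) (I : Finset (Fin t ⊕ Fin t)) : SP t :=
  Setoid.ker fun x : Fin t ⊕ Fin t =>
    if x ∈ I then (Sum.inl true : Bool ⊕ (Fin t ⊕ Fin t))
    else if x ∈ SSfin S then Sum.inl false else Sum.inr x

/-- `N(I)` : the number of top-row (unprimed) elements of `I`. -/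
def NIc {t : ℕ} (I : Finset (Fin t ⊕ Fin t)) : ℕ :=
  (I.filter fun x => x.isLeft = true).card

/-- `M(I)` : the number of bottom-row (primed) elements of `I`. -/
def MIc {t : ℕ} (I : Finset (Fin t ⊕ Fin t)) : ℕ :=
  (I.filter fun x => x.isRight = true).card

/-- The operator `Z_{t,r}` on `V^{⊗t}`.  The inner sum over unordered partitions
`{I, (S∪S′)∖I}` (each counted once) is written as `1/2` times the sum over ordered
proper nonempty subsets `I` of `S ∪ S′`; these agree since `d_I = d_{(S∪S′)∖I}` and
the signs coincide. -/
def Zop (r n t : ℕ) : TP n t →ₗ[ℂ] TP n t :=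
  (n.choose 2 : ℂ) • LinearMap.id +
  ∑ S ∈ (Finset.univ : Finset (Fin t)).powerset.filter (fun S => S ≠ ∅),
    ((-1 : ℂ) ^ S.card) •
      (((n : ℂ) - 1) • phiD n t (bS S) +
        (1 / 2 : ℂ) •
          ∑ I ∈ (SSfin S).powerset.filter (fun I =>
              I ≠ ∅ ∧ I ≠ SSfin S ∧ ((NIc I : ℤ) ≡ (MIc I : ℤ) [ZMOD (r : ℤ)])),
            ((-1 : ℂ) ^ ((NIc I : ℤ) - (MIc I : ℤ))) • (phiD n t (dI S I) - phiD n t (bS S)))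

/-- The operator `Z_{k+1/2,r}` on `V^{⊗(k+1)}`; as in `Zop`, but for `S` containing
`k+1` the inner sum is restricted to partitions in which `k+1` and `(k+1)′` lie in the
same part. -/
def ZopHalf (r n k : ℕ) : TP n (k + 1) →ₗ[ℂ] TP n (k + 1) :=
  (n.choose 2 : ℂ) • LinearMap.id +
  ∑ S ∈ (Finset.univ : Finset (Fin (k + 1))).powerset.filter (fun S => S ≠ ∅),
    ((-1 : ℂ) ^ S.card) •
      (((n : ℂ) - 1) • phiD n (k + 1) (bS S) +
        (1 / 2 : ℂ) •
          ∑ I ∈ (SSfin S).powerset.filter (fun I =>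
              I ≠ ∅ ∧ I ≠ SSfin S ∧ ((NIc I : ℤ) ≡ (MIc I : ℤ) [ZMOD (r : ℤ)]) ∧
              (Fin.last k ∈ S →
                ((Sum.inl (Fin.last k) : Fin (k+1) ⊕ Fin (k+1)) ∈ I ↔
                  (Sum.inr (Fin.last k) : Fin (k+1) ⊕ Fin (k+1)) ∈ I))),
            ((-1 : ℂ) ^ ((NIc I : ℤ) - (MIc I : ℤ))) •
              (phiD n (k + 1) (dI S I) - phiD n (k + 1) (bS S)))

/-- The diagonal action of `κ_{r,n}` on `V^{⊗k}`. -/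
def kappaOpFull (r n k : ℕ) : TP n k →ₗ[ℂ] TP n k :=
  (1 / (r : ℂ)) • ∑ l ∈ Finset.range r, ∑ i : Fin n, ∑ j : Fin n,
    if i < j then tensorPow n k (zijMat n r l i j) else 0

/-- The diagonal action of `κ_{r,n-1}` on `V^{⊗(k+1)}`. -/
def kappaOpL (r n k : ℕ) : TP n (k + 1) →ₗ[ℂ] TP n (k + 1) :=
  (1 / (r : ℂ)) • ∑ l ∈ Finset.range r, ∑ i : Fin n, ∑ j : Fin n,
    if i < j ∧ (j : ℕ) < n - 1 then tensorPow n (k + 1) (zijMat n r l i j) else 0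

/-- `w ⊗ v_n ∈ V^{⊗(k+1)}` for `w ∈ V^{⊗k}`. -/
def extendLast (n k : ℕ) (hn : 0 < n) (w : TP n k) : TP n (k + 1) :=
  fun j => if j (Fin.last k) = lastIdx n hn then w (fun t => j t.castSucc) else 0

/-- `A ⊗ Id_{V^{⊗(l-j)}}` : the extension of an operator on `V^{⊗j}` to `V^{⊗l}`,
acting on the first `j` tensor factors. -/
def extendOp (n j l : ℕ) (hjl : j ≤ l) (A : TP n j →ₗ[ℂ] TP n j) :
    TP n l →ₗ[ℂ] TP n l where
  toFun f := fun u =>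
    A (fun x : Fin j → Fin n =>
        f (fun t : Fin l => if h : (t : ℕ) < j then x ⟨t, h⟩ else u t))
      (fun s : Fin j => u (Fin.castLE hjl s))
  map_add' f g := by
    funext u
    show A (fun x : Fin j → Fin n =>
        (f + g) (fun t : Fin l => if h : (t : ℕ) < j then x ⟨t, h⟩ else u t))
      (fun s : Fin j => u (Fin.castLE hjl s)) =
      A (fun x : Fin j → Fin n =>
        f (fun t : Fin l => if h : (t : ℕ) < j then x ⟨t, h⟩ else u t))
      (fun s : Fin j => u (Fin.castLE hjl s)) +
      A (fun x : Fin j → Fin n =>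
        g (fun t : Fin l => if h : (t : ℕ) < j then x ⟨t, h⟩ else u t))
      (fun s : Fin j => u (Fin.castLE hjl s))
    have h : (fun x : Fin j → Fin n =>
        (f + g) (fun t : Fin l => if h : (t : ℕ) < j then x ⟨t, h⟩ else u t)) =
      (fun x : Fin j → Fin n =>
        f (fun t : Fin l => if h : (t : ℕ) < j then x ⟨t, h⟩ else u t)) +
      (fun x : Fin j → Fin n =>
        g (fun t : Fin l => if h : (t : ℕ) < j then x ⟨t, h⟩ else u t)) := rfl
    rw [h, map_add]
    rfl
  map_smul' c f := by
    funext u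
    show A (fun x : Fin j → Fin n =>
        (c • f) (fun t : Fin l => if h : (t : ℕ) < j then x ⟨t, h⟩ else u t))
      (fun s : Fin j => u (Fin.castLE hjl s)) =
      c • (A (fun x : Fin j → Fin n =>
        f (fun t : Fin l => if h : (t : ℕ) < j then x ⟨t, h⟩ else u t))
      (fun s : Fin j => u (Fin.castLE hjl s)))
    have h : (fun x : Fin j → Fin n =>
        (c • f) (fun t : Fin l => if h : (t : ℕ) < j then x ⟨t, h⟩ else u t)) =
      c • (fun x : Fin j → Fin n =>
        f (fun t : Fin l => if h : (t : ℕ) < j then x ⟨t, h⟩ else u t)) := rfl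
    rw [h, _root_.map_smul]
    rfl

/-! ## Diagram multiplication (statement of the structure constants) -/

/-- The bottom row of `d₁` matches the top row of `d₂`. -/
def rowMatch (k : ℕ) (d1 d2 : SP k) : Prop :=
  ∀ i j : Fin k, d1.r (Sum.inr i) (Sum.inr j) ↔ d2.r (Sum.inl i) (Sum.inl j)

/-- Extend a setoid on `α` along an injection `e : α → β` by singleton classes on
the complement of the range. -/
def extendSetoid {α β : Type*} (e : α → β) (he : Function.Injective e)
    (d : Setoid α) : Setoid β where
  r x y := x = y ∨ ∃ a b, d.r a b ∧ x = e a ∧ y = e b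
  iseqv := by
    constructor
    · intro x; exact Or.inl rfl
    · rintro x y (rfl | ⟨a, b, hab, rfl, rfl⟩)
      · exact Or.inl rfl
      · exact Or.inr ⟨b, a, d.iseqv.symm hab, rfl, rfl⟩
    · rintro x y z (rfl | ⟨a, b, hab, rfl, rfl⟩) h2
      · exact h2
      · rcases h2 with rfl | ⟨a', b', hab', hy, rfl⟩
        · exact Or.inr ⟨a, b, hab, rfl, rfl⟩
        · have hba : b = a' := he hy
          exact Or.inr ⟨a, b', d.iseqv.trans hab (hba ▸ hab'), rfl, rfl⟩

/-- The three-row vertex set: top row, middle row, bottom row. -/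
abbrev T3 (k : ℕ) : Type := Fin k ⊕ (Fin k ⊕ Fin k)

/-- `d₁` placed on the top and middle rows. -/
def embT (k : ℕ) : Fin k ⊕ Fin k → T3 k := Sum.map id Sum.inl

/-- `d₂` placed on the middle and bottom rows. -/
def embB (k : ℕ) : Fin k ⊕ Fin k → T3 k := Sum.inr

/-- The outer (top and bottom) rows. -/
def embO (k : ℕ) : Fin k ⊕ Fin k → T3 k := Sum.map id Sum.inr

lemma embT_inj (k : ℕ) : Function.Injective (embT k) :=
  Function.Injective.sumMap Function.injective_id Sum.inl_injective

/-- The stacked three-row diagram : the join of `d₁` (on top∪middle) and `d₂`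
(on middle∪bottom); its classes are the connected components. -/
def stacked (k : ℕ) (d1 d2 : SP k) : Setoid (T3 k) :=
  extendSetoid (embT k) (embT_inj k) d1 ⊔ extendSetoid (embB k) Sum.inr_injective d2

/-- The concatenation `d₁ ∘ d₂`, i.e. the restriction of the stacked diagram to the
outer rows. -/
def compSetoid (k : ℕ) (d1 d2 : SP k) : SP k :=
  Setoid.comap (embO k) (stacked k d1 d2)

/-- `[d₁ ∘ d₂]` : the number of connected components of the stacked diagram contained
entirely in the middle row. -/
def midCount (k : ℕ) (d1 d2 : SP k) : ℕ :=
  Nat.card {q : Quotient (stacked k d1 d2) //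
    ∀ x : T3 k, Quotient.mk (stacked k d1 d2) x = q → ∃ i : Fin k, x = Sum.inr (Sum.inl i)}

/-- A block entirely contained in the top row. -/
def topOnly {k : ℕ} (d : SP k) (q : Quotient d) : Prop :=
  ∀ x, Quotient.mk d x = q → ∃ i : Fin k, x = Sum.inl i

/-- A block entirely contained in the bottom row. -/
def botOnly {k : ℕ} (d : SP k) (q : Quotient d) : Prop :=
  ∀ x, Quotient.mk d x = q → ∃ i : Fin k, x = Sum.inr i

/-- `x` lies in the block merged from the pair `pr = (q₁, q₂)`. -/
def memPair {k : ℕ} (d1 d2 : SP k) : Fin k ⊕ Fin k → Quotient d1 × Quotient d2 → Prop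
  | Sum.inl i, pr => Quotient.mk d1 (Sum.inl i) = pr.1
  | Sum.inr i, pr => Quotient.mk d2 (Sum.inr i) = pr.2

/-- `d` is obtained from `d₁ ∘ d₂` by choosing an injective partial matching between
the top-only blocks of `d₁` and the bottom-only blocks of `d₂` and merging each
matched pair into a single block. -/
def IsCoarsening (k : ℕ) (d1 d2 d : SP k) : Prop :=
  ∃ P : Finset (Quotient d1 × Quotient d2),
    (∀ pr ∈ P, topOnly d1 pr.1 ∧ botOnly d2 pr.2) ∧
    (∀ pr ∈ P, ∀ pr' ∈ P, pr.1 = pr'.1 → pr = pr') ∧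
    (∀ pr ∈ P, ∀ pr' ∈ P, pr.2 = pr'.2 → pr = pr') ∧
    (∀ x y : Fin k ⊕ Fin k, d.r x y ↔
      ((compSetoid k d1 d2).r x y ∨ ∃ pr ∈ P, memPair d1 d2 x pr ∧ memPair d1 d2 y pr))

/-- The (integer) falling factorial `(a)_b = a(a-1)⋯(a-b+1)`. -/
def fallingC (a : ℤ) (b : ℕ) : ℤ := ∏ i ∈ Finset.range b, (a - i)

/-! ## The elements `c₁, c₂` of `G(2,2,2k)` and the operator `M_{k,2,2}` -/

/-- The underlying function of the permutation `(1 2)(3 4)⋯(2k-1 2k)` of `Fin (2k)`: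
it swaps `2t` and `2t+1` (0-indexed) for each `t < k`. -/
def pairFn (k : ℕ) : Fin (2 * k) → Fin (2 * k) := fun x =>
  if _ : (x : ℕ) % 2 = 0 then ⟨(x : ℕ) + 1, by have := x.2; omega⟩
  else ⟨(x : ℕ) - 1, by have := x.2; omega⟩

lemma pairFn_invol (k : ℕ) : Function.Involutive (pairFn k) := by
  intro x
  unfold pairFn
  split_ifs with h1 h2 h3
  · refine Fin.ext ?_; simp only [Fin.val_mk] at h2 ⊢; omega
  · refine Fin.ext ?_; simp only [Fin.val_mk] at h2 ⊢; omega
  · refine Fin.ext ?_; simp only [Fin.val_mk] at h3 ⊢; omega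
  · refine Fin.ext ?_; simp only [Fin.val_mk] at h3 ⊢; omega

/-- The permutation `(1 2)(3 4)⋯(2k-1 2k)` of `Fin (2k)`. -/
def pairPerm (k : ℕ) : Equiv.Perm (Fin (2 * k)) :=
  Function.Involutive.toPerm (pairFn k) (pairFn_invol k)

/-- `c₂` : the permutation matrix of `(1 2)(3 4)⋯(2k-1 2k)`. -/
def c2Mat (k : ℕ) : Matrix (Fin (2 * k)) (Fin (2 * k)) ℂ :=
  monoMat (2 * k) (pairPerm k) (fun _ => 1)

/-- The diagonal matrix `diag(-1,-1,1,…,1)`. -/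
def dMat (k : ℕ) : Matrix (Fin (2 * k)) (Fin (2 * k)) ℂ :=
  Matrix.diagonal fun t => if (t : ℕ) < 2 then (-1 : ℂ) else 1

/-- `c₁ = D · c₂`. -/
def c1Mat (k : ℕ) : Matrix (Fin (2 * k)) (Fin (2 * k)) ℂ := dMat k * c2Mat k

/-- Two matrices are conjugate by an element of `G(r,p,n)`. -/
def conjIn (r p n : ℕ) (c x : Matrix (Fin n) (Fin n) ℂ) : Prop :=
  ∃ g ∈ GSet r p n, g * c = x * g

/-- The conjugacy class of `c` in `G(r,p,n)`. -/
def conjClass (r p n : ℕ) (c : Matrix (Fin n) (Fin n) ℂ) :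
    Set (Matrix (Fin n) (Fin n) ℂ) :=
  {h | h ∈ GSet r p n ∧ conjIn r p n c h}

/-- The set partition of `{1,…,k,1′,…,k′}` all of whose blocks are singletons. -/
def singletonSP (k : ℕ) : SP k := ⟨Eq, eq_equivalence⟩

/-- The operator `M_{k,2,2} = φ_k(x_{d₀})` on `(ℂ^{2k})^{⊗k}`, where `d₀` is the set
partition with all blocks singletons. -/
def Mop (k : ℕ) : TP (2 * k) k →ₗ[ℂ] TP (2 * k) k :=
  phiX (2 * k) k (singletonSP k)

/-! ### Auxiliary development for Statement 1 -/

section Aux1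

lemma exists_perm_comp {α β : Type*} [Finite α] [Fintype β]
    (f g : α → β) (hf : Function.Injective f) (hg : Function.Injective g) :
    ∃ π : Equiv.Perm β, ∀ x, π (f x) = g x := by
  cases nonempty_fintype α
  have hcard : Fintype.card {x // ¬ x ∈ Set.range f} = Fintype.card {x // ¬ x ∈ Set.range g} := by
    rw [Fintype.card_subtype_compl, Fintype.card_subtype_compl]
    congr 1
    exact (Set.card_range_of_injective hf).trans (Set.card_range_of_injective hg).symm
  refine ⟨Equiv.subtypeCongr
    ((Equiv.ofInjective f hf).symm.trans (Equiv.ofInjective g hg))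
    (Fintype.equivOfCardEq hcard), fun x => ?_⟩
  unfold Equiv.subtypeCongr
  simp only [Equiv.trans_apply]
  rw [Equiv.sumCompl_symm_apply_of_pos (Set.mem_range_self x)]
  simp only [Equiv.sumCongr_apply, Sum.map_inl, Equiv.sumCompl_apply_inl]
  have h1 : (⟨f x, Set.mem_range_self x⟩ : {y // y ∈ Set.range f}) = Equiv.ofInjective f hf x := by
    ext; simp
  rw [h1, Equiv.trans_apply, Equiv.symm_apply_apply, Equiv.ofInjective_apply]

lemma zeta_zpow_eq_one_iff {r : ℕ} (hr : 0 < r) (j : ℤ) :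
    zeta r ^ j = 1 ↔ (r : ℤ) ∣ j := by
  have h := Complex.isPrimitiveRoot_exp r hr.ne'
  exact h.zpow_eq_one_iff_dvd j

lemma zpow_congr_mod {a : ℂ} {r : ℕ} (ha : a ^ r = 1) (h0 : a ≠ 0) {x y : ℤ}
    (h : x ≡ y [ZMOD (r:ℤ)]) : a ^ x = a ^ y := by
  obtain ⟨j, hj⟩ := h.dvd
  have hy : y = x + (r:ℤ) * j := by linarith
  rw [hy, zpow_add₀ h0, _root_.zpow_mul, zpow_natCast, ha, _root_.one_zpow, mul_one]

lemma prod_comp_card {n t : ℕ} (f : Fin n → ℂ) (c : Fin t → Fin n) :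
    ∏ s : Fin t, f (c s) = ∏ v : Fin n, f v ^ (Finset.univ.filter fun s => c s = v).card := by
  rw [← Finset.prod_fiberwise Finset.univ c (fun s => f (c s))]
  refine Finset.prod_congr rfl fun v _ => ?_
  rw [show ∏ s ∈ Finset.univ.filter (fun s => c s = v), f (c s)
      = ∏ s ∈ Finset.univ.filter (fun s => c s = v), f v from
    Finset.prod_congr rfl fun s hs => by rw [(Finset.mem_filter.mp hs).2],
    Finset.prod_const]

lemma sum_comp_card {n t : ℕ} (E : Fin n → ℕ) (c : Fin t → Fin n) :
    ∑ s : Fin t, E (c s) = ∑ v : Fin n, (Finset.univ.filter fun s => c s = v).card * E v := by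
  rw [← Finset.sum_fiberwise Finset.univ c (fun s => E (c s))]
  refine Finset.sum_congr rfl fun v _ => ?_
  rw [show ∑ s ∈ Finset.univ.filter (fun s => c s = v), E (c s)
      = ∑ s ∈ Finset.univ.filter (fun s => c s = v), E v from
    Finset.sum_congr rfl fun s hs => by rw [(Finset.mem_filter.mp hs).2],
    Finset.sum_const, smul_eq_mul]

/-- `N(v)` : number of top-row entries of `c` with value `v`. -/
def NvC {n t : ℕ} (c : Fin t ⊕ Fin t → Fin n) (v : Fin n) : ℕ :=
  (Finset.univ.filter fun s : Fin t => c (Sum.inl s) = v).card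

/-- `M(v)` : number of bottom-row entries of `c` with value `v`. -/
def MvC {n t : ℕ} (c : Fin t ⊕ Fin t → Fin n) (v : Fin n) : ℕ :=
  (Finset.univ.filter fun s : Fin t => c (Sum.inr s) = v).card

lemma topCt_ker {n t : ℕ} (c : Fin t ⊕ Fin t → Fin n) (x : Fin t ⊕ Fin t) :
    topCt (Setoid.ker c) (Quotient.mk _ x) = NvC c (c x) := by
  unfold topCt NvC
  rw [Nat.card_eq_fintype_card, Fintype.card_subtype]
  congr 1
  apply Finset.filter_congr
  intro a _
  exact ⟨fun h => Quotient.exact h, fun h => Quotient.sound h⟩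

lemma botCt_ker {n t : ℕ} (c : Fin t ⊕ Fin t → Fin n) (x : Fin t ⊕ Fin t) :
    botCt (Setoid.ker c) (Quotient.mk _ x) = MvC c (c x) := by
  unfold botCt MvC
  rw [Nat.card_eq_fintype_card, Fintype.card_subtype]
  congr 1
  apply Finset.filter_congr
  intro a _
  exact ⟨fun h => Quotient.exact h, fun h => Quotient.sound h⟩

/-- The injection of the blocks of `ker c` into the value set. -/
def kerLift {n t : ℕ} (c : Fin t ⊕ Fin t → Fin n) : Quotient (Setoid.ker c) → Fin n :=
  Quotient.lift c (fun _ _ h => h)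

lemma kerLift_mk {n t : ℕ} (c : Fin t ⊕ Fin t → Fin n) (x : Fin t ⊕ Fin t) :
    kerLift c (Quotient.mk _ x) = c x := rfl

lemma kerLift_inj {n t : ℕ} (c : Fin t ⊕ Fin t → Fin n) :
    Function.Injective (kerLift c) := fun q q' =>
  Quotient.inductionOn₂ q q' (fun _ _ h => Quotient.sound h)

lemma nBlocks_ker_le {n t : ℕ} (c : Fin t ⊕ Fin t → Fin n) :
    nBlocks (Setoid.ker c) ≤ n := by
  have h := Nat.card_le_card_of_injective (kerLift c) (kerLift_inj c)
  simpa [nBlocks] using h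

lemma kerLift_surj {n t : ℕ} (c : Fin t ⊕ Fin t → Fin n)
    (h : nBlocks (Setoid.ker c) = n) : Function.Surjective (kerLift c) := by
  letI : Fintype (Quotient (Setoid.ker c)) := Fintype.ofFinite _
  refine ((Fintype.bijective_iff_injective_and_card _).2 ⟨kerLift_inj c, ?_⟩).2
  rw [Fintype.card_fin, ← Nat.card_eq_fintype_card]
  exact h

end Aux1

section Aux2

lemma phase_eq {r p n k : ℕ} (hr : 0 < r) (hp : 0 < p) (hpr : p ∣ r)
    (c : Fin (k+1) ⊕ Fin (k+1) → Fin n)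
    (hA : inPi r (Setoid.ker c) ∨ inLambda r p n (Setoid.ker c))
    (a : Fin n → ℂ) (ha : ∀ v, a v ^ r = 1) (hprod : (∏ v, a v) ^ (r / p) = 1) :
    ∏ s, a (c (Sum.inl s)) = ∏ s, a (c (Sum.inr s)) := by
  have ha0 : ∀ v, a v ≠ 0 := fun v => a_ne_zero hr (ha v)
  rw [prod_comp_card a (fun s => c (Sum.inl s)), prod_comp_card a (fun s => c (Sum.inr s))]
  have hzc : ∀ E : Fin n → ℕ, ∏ v, a v ^ E v = ∏ v, a v ^ (E v : ℤ) :=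
    fun E => Finset.prod_congr rfl fun v _ => (zpow_natCast _ _).symm
  show ∏ v, a v ^ NvC c v = ∏ v, a v ^ MvC c v
  rw [hzc (fun v => NvC c v), hzc (fun v => MvC c v)]
  rcases hA with hPi | hLam
  · refine Finset.prod_congr rfl fun v _ => ?_
    by_cases hv : ∃ x, c x = v
    · obtain ⟨x, rfl⟩ := hv
      have h1 := hPi (Quotient.mk _ x)
      rw [topCt_ker, botCt_ker] at h1
      exact zpow_congr_mod (ha _) (ha0 _) h1
    · have hN : NvC c v = 0 := by
        refine Finset.card_eq_zero.mpr (Finset.filter_eq_empty_iff.mpr fun s _ => ?_)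
        exact fun h => hv ⟨_, h⟩
      have hM : MvC c v = 0 := by
        refine Finset.card_eq_zero.mpr (Finset.filter_eq_empty_iff.mpr fun s _ => ?_)
        exact fun h => hv ⟨_, h⟩
      rw [hN, hM]
  · obtain ⟨hnb, hblocks, hdiff⟩ := hLam
    have hsurj := kerLift_surj c hnb
    set q1 : Quotient (Setoid.ker c) := Quotient.mk _ (Sum.inl (Fin.last k)) with hq1
    set e : ℤ := (topCt (Setoid.ker c) q1 : ℤ) - botCt (Setoid.ker c) q1 with he
    have hme : ((r / p : ℕ) : ℤ) ∣ e := by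
      have h2 := (hblocks q1).1
      have h3 := h2.dvd
      have h4 : e = -((botCt (Setoid.ker c) q1 : ℤ) - topCt (Setoid.ker c) q1) := by
        rw [he]; ring
      rw [h4]
      exact dvd_neg.mpr h3
    have key : ∀ v, a v ^ (NvC c v : ℤ) = a v ^ (MvC c v : ℤ) * a v ^ e := by
      intro v
      obtain ⟨q, hq⟩ := hsurj v
      obtain ⟨x, rfl⟩ := q.exists_rep
      rw [kerLift_mk] at hq
      subst hq
      have h2 := hdiff (Quotient.mk _ x) q1
      rw [topCt_ker, botCt_ker] at h2
      have h3 : (NvC c (c x) : ℤ) ≡ (MvC c (c x) : ℤ) + e [ZMOD (r:ℤ)] := by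
        have := Int.ModEq.add_right ((MvC c (c x) : ℤ)) h2
        calc (NvC c (c x) : ℤ) = (NvC c (c x) : ℤ) - MvC c (c x) + MvC c (c x) := by ring
        _ ≡ e + MvC c (c x) [ZMOD (r:ℤ)] := Int.ModEq.add_right _ h2
        _ = (MvC c (c x) : ℤ) + e := by ring
      rw [zpow_congr_mod (ha _) (ha0 _) h3, zpow_add₀ (ha0 _)]
    rw [Finset.prod_congr rfl (fun v _ => key v), Finset.prod_mul_distrib,
      Finset.prod_zpow]
    obtain ⟨j, hj⟩ := hme
    rw [hj, _root_.zpow_mul, zpow_natCast, hprod, _root_.one_zpow, mul_one]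

lemma phase_ne_of_exp {r n k : ℕ} (hr : 0 < r) (c : Fin (k+1) ⊕ Fin (k+1) → Fin n)
    (E : Fin n → ℕ)
    (hnd : ¬ ((r:ℤ) ∣ (∑ v, (NvC c v : ℤ) * E v) - ∑ v, (MvC c v : ℤ) * E v)) :
    ∏ s, zeta r ^ E (c (Sum.inl s)) ≠ ∏ s, zeta r ^ E (c (Sum.inr s)) := by
  intro hEq
  apply hnd
  have h1 : ∏ s, zeta r ^ E (c (Sum.inl s)) = zeta r ^ ∑ s, E (c (Sum.inl s)) :=
    Finset.prod_pow_eq_pow_sum _ _ _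
  have h2 : ∏ s, zeta r ^ E (c (Sum.inr s)) = zeta r ^ ∑ s, E (c (Sum.inr s)) :=
    Finset.prod_pow_eq_pow_sum _ _ _
  rw [h1, h2] at hEq
  have h3 : zeta r ^ ((∑ s, E (c (Sum.inl s)) : ℕ) : ℤ)
      = zeta r ^ ((∑ s, E (c (Sum.inr s)) : ℕ) : ℤ) := by
    rw [zpow_natCast, zpow_natCast]; exact hEq
  have h4 : zeta r ^ (((∑ s, E (c (Sum.inl s)) : ℕ) : ℤ) - ((∑ s, E (c (Sum.inr s)) : ℕ) : ℤ)) = 1 := by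
    rw [zpow_sub₀ (zeta_ne_zero r), h3, div_self]
    exact zpow_ne_zero _ (zeta_ne_zero r)
  have h5 := (zeta_zpow_eq_one_iff hr _).mp h4
  have hN : ((∑ s, E (c (Sum.inl s)) : ℕ) : ℤ) = ∑ v, (NvC c v : ℤ) * E v := by
    rw [sum_comp_card E (fun s => c (Sum.inl s))]
    push_cast
    rfl
  have hM : ((∑ s, E (c (Sum.inr s)) : ℕ) : ℤ) = ∑ v, (MvC c v : ℤ) * E v := by
    rw [sum_comp_card E (fun s => c (Sum.inr s))]
    push_cast
    rfl
  rwa [hN, hM] at h5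

end Aux2

section Aux3

lemma modEq_iff_dvd_sub' {x y : ℤ} {r : ℕ} : x ≡ y [ZMOD (r:ℤ)] ↔ (r:ℤ) ∣ x - y := by
  rw [Int.modEq_iff_dvd, ← neg_sub x y, dvd_neg]

lemma exists_phase_ne {r p n k : ℕ} (hr : 0 < r) (hp : 0 < p) (hpr : p ∣ r)
    (c : Fin (k+1) ⊕ Fin (k+1) → Fin n)
    (hnP : ¬ inPi r (Setoid.ker c)) (hnL : ¬ inLambda r p n (Setoid.ker c)) :
    ∃ a : Fin n → ℂ, (∀ v, a v ^ r = 1) ∧ (∏ v, a v) ^ (r / p) = 1 ∧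
      ∏ s, a (c (Sum.inl s)) ≠ ∏ s, a (c (Sum.inr s)) := by
  classical
  have hmr : p * (r / p) = r := Nat.mul_div_cancel' hpr
  set e : Fin n → ℤ := fun v => (NvC c v : ℤ) - MvC c v with he
  have hpow : ∀ E : Fin n → ℕ, ∀ v, (zeta r ^ E v) ^ r = 1 := by
    intro E v
    rw [← pow_mul, mul_comm, pow_mul, zeta_pow_self hr, one_pow]
  have hEprod : ∀ E : Fin n → ℕ, ∏ v, zeta r ^ E v = zeta r ^ ∑ v, E v :=
    fun E => Finset.prod_pow_eq_pow_sum _ _ _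
  rw [inPi] at hnP
  push_neg at hnP
  obtain ⟨q0, hq0⟩ := hnP
  obtain ⟨x0, rfl⟩ := q0.exists_rep
  rw [topCt_ker, botCt_ker] at hq0
  have he0 : ¬ ((r:ℤ) ∣ e (c x0)) := fun hdvd => hq0 (modEq_iff_dvd_sub'.mpr hdvd)
  have hdiffsum : ∀ E : Fin n → ℕ,
      (∑ v, (NvC c v : ℤ) * E v) - ∑ v, (MvC c v : ℤ) * E v = ∑ v, e v * E v := by
    intro E
    rw [← Finset.sum_sub_distrib]
    exact Finset.sum_congr rfl fun v _ => by rw [he]; ring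
  by_cases hconst : ∀ w, e w ≡ e (c x0) [ZMOD (r:ℤ)]
  · by_cases hmall : ∀ v, ((r / p : ℕ) : ℤ) ∣ e v
    · exfalso
      apply hnL
      have hatt : ∀ v, ∃ x, c x = v := by
        intro v
        by_contra hv
        push_neg at hv
        have hN : NvC c v = 0 :=
          Finset.card_eq_zero.mpr (Finset.filter_eq_empty_iff.mpr fun s _ => hv _)
        have hM : MvC c v = 0 :=
          Finset.card_eq_zero.mpr (Finset.filter_eq_empty_iff.mpr fun s _ => hv _)
        have hev : e v = 0 := by rw [he]; simp [hN, hM]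
        have hd := (hconst v).symm.dvd
        rw [hev, zero_sub] at hd
        exact he0 (dvd_neg.mp hd)
      have hsurj : Function.Surjective (kerLift c) := by
        intro v
        obtain ⟨x, hx⟩ := hatt v
        exact ⟨Quotient.mk _ x, by rw [kerLift_mk, hx]⟩
      have hnb : nBlocks (Setoid.ker c) = n := by
        refine le_antisymm (nBlocks_ker_le c) ?_
        have := Nat.card_le_card_of_surjective (kerLift c) hsurj
        simpa [nBlocks] using this
      refine ⟨hnb, ?_, ?_⟩
      · intro q
        obtain ⟨x, rfl⟩ := q.exists_rep
        rw [topCt_ker, botCt_ker]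
        constructor
        · exact modEq_iff_dvd_sub'.mpr (hmall (c x))
        · intro hcon
          have h1 : (r:ℤ) ∣ e (c x) := modEq_iff_dvd_sub'.mp hcon
          have h2 : (r:ℤ) ∣ e (c x0) - e (c x) := (hconst (c x)).dvd
          have h3 : (r:ℤ) ∣ e (c x0) := by
            have := dvd_add h2 h1
            simpa using this
          exact he0 h3
      · intro q q'
        obtain ⟨x, rfl⟩ := q.exists_rep
        obtain ⟨y, rfl⟩ := q'.exists_rep
        rw [topCt_ker, botCt_ker, topCt_ker, botCt_ker]
        exact (hconst (c x)).trans (hconst (c y)).symm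
    · push_neg at hmall
      obtain ⟨v1, hv1⟩ := hmall
      set E : Fin n → ℕ := fun v => if v = v1 then p else 0 with hE
      refine ⟨fun v => zeta r ^ E v, hpow E, ?_, ?_⟩
      · rw [hEprod]
        have hsum : ∑ v, E v = p := by
          simp [hE, Finset.sum_ite_eq']
        rw [hsum, ← pow_mul, hmr, zeta_pow_self hr]
      · apply phase_ne_of_exp hr c E
        rw [hdiffsum]
        have hsum2 : ∑ v, e v * (E v : ℤ) = e v1 * p := by
          have hterm : ∀ v, e v * (E v : ℤ) = if v = v1 then e v * (p:ℤ) else 0 := by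
            intro v
            by_cases h1 : v = v1 <;> simp [hE, h1]
          rw [Finset.sum_congr rfl (fun v _ => hterm v),
            Finset.sum_ite_eq' Finset.univ v1 (fun v => e v * (p:ℤ))]
          simp
        rw [hsum2]
        intro hdvd
        apply hv1
        obtain ⟨j, hj⟩ := hdvd
        refine ⟨j, ?_⟩
        have hp0 : (p:ℤ) ≠ 0 := Int.natCast_ne_zero.mpr hp.ne'
        have hr' : ((r:ℕ):ℤ) = (p:ℤ) * ((r/p : ℕ):ℤ) := by exact_mod_cast hmr.symm
        have hkey : (p:ℤ) * e v1 = (p:ℤ) * (((r/p : ℕ):ℤ) * j) := by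
          calc (p:ℤ) * e v1 = e v1 * p := by ring
          _ = (r:ℤ) * j := hj
          _ = (p:ℤ) * (((r/p:ℕ):ℤ) * j) := by rw [hr']; ring
        exact mul_left_cancel₀ hp0 hkey
  · push_neg at hconst
    obtain ⟨w, hw⟩ := hconst
    have hwne : w ≠ c x0 := by
      intro h
      exact hw (h ▸ Int.ModEq.refl _)
    set E : Fin n → ℕ := fun v => (if v = c x0 then 1 else 0) + (if v = w then r - 1 else 0) with hE
    refine ⟨fun v => zeta r ^ E v, hpow E, ?_, ?_⟩
    · rw [hEprod]
      have hsum : ∑ v, E v = r := by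
        have hterm : ∀ v, E v = (if v = c x0 then 1 else 0) + (if v = w then r-1 else 0) :=
          fun v => by rw [hE]
        rw [Finset.sum_congr rfl (fun v _ => hterm v), Finset.sum_add_distrib,
          Finset.sum_ite_eq' Finset.univ (c x0) (fun _ => 1),
          Finset.sum_ite_eq' Finset.univ w (fun _ => r-1)]
        simp only [Finset.mem_univ, if_true]
        omega
      rw [hsum, zeta_pow_self hr, one_pow]
    · apply phase_ne_of_exp hr c E
      rw [hdiffsum]
      have hsum2 : ∑ v, e v * (E v : ℤ) = e (c x0) + e w * ((r-1:ℕ):ℤ) := by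
        have hterm : ∀ v, e v * (E v : ℤ)
            = (if v = c x0 then e v else 0) + (if v = w then e v * ((r-1:ℕ):ℤ) else 0) := by
          intro v
          by_cases h1 : v = c x0
          · have h2 : ¬ v = w := fun hvw => hwne (by rw [← hvw, h1])
            have h3 : ¬ c x0 = w := fun hh => hwne hh.symm
            simp [hE, h1, h2, h3]
          · by_cases h2 : v = w
            · simp [hE, h1, h2, hwne]
            · simp [hE, h1, h2]
        rw [Finset.sum_congr rfl (fun v _ => hterm v), Finset.sum_add_distrib,
          Finset.sum_ite_eq' Finset.univ (c x0) (fun v => e v),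
          Finset.sum_ite_eq' Finset.univ w (fun v => e v * ((r-1:ℕ):ℤ))]
        simp
      rw [hsum2]
      intro hdvd
      apply hw
      apply modEq_iff_dvd_sub'.mpr
      have hcast : ((r - 1 : ℕ) : ℤ) = (r : ℤ) - 1 := by omega
      have h6 : e w - e (c x0) = (r:ℤ) * e w - (e (c x0) + e w * ((r-1:ℕ):ℤ)) := by
        rw [hcast]; ring
      rw [h6]
      exact dvd_sub (Dvd.intro _ rfl) hdvd

end Aux3

section Aux4

/-- The indicator (basis) tensor `v_{i_1} ⊗ ⋯ ⊗ v_{i_t}`. -/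
def deltaFn (n t : ℕ) (i : Fin t → Fin n) : TP n t := fun j => if j = i then 1 else 0

lemma kernelMap_apply (n t : ℕ) (K : (Fin t → Fin n) → (Fin t → Fin n) → ℂ)
    (f : TP n t) (o : Fin t → Fin n) :
    kernelMap n t K f o = ∑ i, K o i * f i := rfl

lemma kernelMap_delta (n t : ℕ) (K : (Fin t → Fin n) → (Fin t → Fin n) → ℂ)
    (i : Fin t → Fin n) : kernelMap n t K (deltaFn n t i) = fun o => K o i := by
  funext o
  rw [kernelMap_apply]
  rw [Finset.sum_congr rfl (fun j _ => by
    rw [show K o j * deltaFn n t i j = if j = i then K o j else 0 by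
      simp only [deltaFn]; split <;> simp])]
  rw [Finset.sum_ite_eq' Finset.univ i (fun j => K o j)]
  simp

lemma phiX_delta (n t : ℕ) (d : SP t) (i : Fin t → Fin n) :
    phiX n t d (deltaFn n t i) = fun o => coeX n t d (Sum.elim i o) :=
  kernelMap_delta n t _ i

lemma coeX_eq_ite (n t : ℕ) (d : SP t) (c : Fin t ⊕ Fin t → Fin n) :
    coeX n t d c = if d = Setoid.ker c then 1 else 0 := by
  by_cases h : d = Setoid.ker c
  · rw [if_pos h, coeX, if_pos]
    intro a b
    rw [h]
    exact Iff.rfl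
  · rw [if_neg h, coeX, if_neg]
    intro hall
    exact h (Setoid.ext hall)

lemma ker_comp_perm {n t : ℕ} (π : Equiv.Perm (Fin n)) (c : Fin t ⊕ Fin t → Fin n) :
    Setoid.ker (fun x => π (c x)) = Setoid.ker c := by
  apply Setoid.ext
  intro a b
  exact π.injective.eq_iff

lemma coeX_comp_perm (n t : ℕ) (d : SP t) (π : Equiv.Perm (Fin n))
    (c : Fin t ⊕ Fin t → Fin n) :
    coeX n t d (fun x => π (c x)) = coeX n t d c := by
  rw [coeX_eq_ite, coeX_eq_ite, ker_comp_perm]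

lemma tensorPow_monoMat_apply (n t : ℕ) (π : Equiv.Perm (Fin n)) (a : Fin n → ℂ)
    (f : TP n t) (o : Fin t → Fin n) :
    tensorPow n t (monoMat n π a) f o
      = (∏ s, a (π⁻¹ (o s))) * f (fun s => π⁻¹ (o s)) := by
  show ∑ i, (∏ s, monoMat n π a (o s) (i s)) * f i = _
  have hterm : ∀ i : Fin t → Fin n, (∏ s, monoMat n π a (o s) (i s))
      = if i = (fun s => π⁻¹ (o s)) then (∏ s, a (π⁻¹ (o s))) else 0 := by
    intro i
    by_cases hi : i = fun s => π⁻¹ (o s)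
    · subst hi
      rw [if_pos rfl]
      refine Finset.prod_congr rfl fun s _ => ?_
      show (if o s = π (π⁻¹ (o s)) then a (π⁻¹ (o s)) else 0) = a (π⁻¹ (o s))
      rw [if_pos (by simp)]
    · rw [if_neg hi]
      obtain ⟨s, hs⟩ : ∃ s, i s ≠ π⁻¹ (o s) := by
        by_contra hc
        push_neg at hc
        exact hi (funext hc)
      refine Finset.prod_eq_zero (Finset.mem_univ s) ?_
      show (if o s = π (i s) then a (i s) else 0) = 0
      rw [if_neg]
      intro h
      exact hs (by rw [h]; simp)
  rw [Finset.sum_congr rfl (fun i _ => by rw [hterm i, ite_mul, zero_mul])]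
  rw [Finset.sum_ite_eq' Finset.univ (fun s => π⁻¹ (o s))
    (fun i => (∏ s, a (π⁻¹ (o s))) * f i)]
  simp

lemma tensorPow_monoMat_delta (n t : ℕ) (π : Equiv.Perm (Fin n)) (a : Fin n → ℂ)
    (i : Fin t → Fin n) :
    tensorPow n t (monoMat n π a) (deltaFn n t i)
      = (∏ s, a (i s)) • deltaFn n t (fun s => π (i s)) := by
  funext o
  rw [tensorPow_monoMat_apply]
  show _ = (∏ s, a (i s)) * (if o = (fun s => π (i s)) then 1 else 0)
  by_cases ho : o = fun s => π (i s)
  · subst ho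
    rw [if_pos rfl, mul_one]
    have h1 : (fun s => π⁻¹ (π (i s))) = i := funext fun s => by simp
    simp only [deltaFn]
    rw [if_pos h1, mul_one]
    exact Finset.prod_congr rfl fun s _ => by simp
  · rw [if_neg ho, mul_zero]
    simp only [deltaFn]
    rw [if_neg, mul_zero]
    intro h
    apply ho
    funext s
    have := congrFun h s
    rw [← this]
    simp

lemma delta_mem_W {n k : ℕ} (hn : 0 < n) (i : Fin (k+1) → Fin n)
    (hi : i (Fin.last k) = lastIdx n hn) : deltaFn n (k+1) i ∈ Wsub n k hn := by
  intro j hj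
  simp only [deltaFn]
  rw [if_neg]
  rintro rfl
  exact hj hi

/-- The basis vector of `W` indexed by a tuple with last entry `n`. -/
def eW {n k : ℕ} (hn : 0 < n) (i : Fin (k+1) → Fin n)
    (hi : i (Fin.last k) = lastIdx n hn) : ↥(Wsub n k hn) :=
  ⟨deltaFn n (k+1) i, delta_mem_W hn i hi⟩

lemma W_ext {n k : ℕ} (hn : 0 < n) {M : Type*} [AddCommMonoid M] [Module ℂ M]
    (F G : ↥(Wsub n k hn) →ₗ[ℂ] M)
    (h : ∀ i hi, F (eW hn i hi) = G (eW hn i hi)) : F = G := by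
  have hrep : ∀ x : ↥(Wsub n k hn), x =
      ∑ i ∈ (Finset.univ.filter fun i : Fin (k+1) → Fin n =>
        i (Fin.last k) = lastIdx n hn).attach,
        (x : TP n (k+1)) i.1 • eW hn i.1 (Finset.mem_filter.mp i.2).2 := by
    intro x
    apply Subtype.ext
    rw [Submodule.coe_sum]
    funext u
    rw [Finset.sum_apply]
    have hterm : ∀ i ∈ (Finset.univ.filter fun i : Fin (k+1) → Fin n =>
        i (Fin.last k) = lastIdx n hn).attach,
        ((((x : TP n (k+1)) i.1 • eW hn i.1 (Finset.mem_filter.mp i.2).2 : ↥(Wsub n k hn)) :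
          TP n (k+1)) u)
          = (x : TP n (k+1)) i.1 * (if u = i.1 then 1 else 0) := by
      intro i _
      rfl
    rw [Finset.sum_congr rfl hterm]
    by_cases hu : u (Fin.last k) = lastIdx n hn
    · rw [Finset.sum_congr rfl (fun i _ => by
        rw [mul_ite, mul_one, mul_zero,
          show (if u = i.1 then (x : TP n (k+1)) i.1 else 0)
            = if u = i.1 then (x : TP n (k+1)) u else 0 by
          split <;> simp_all])]
      rw [← Finset.sum_filter]
      have : (Finset.univ.filter fun i : Fin (k+1) → Fin n =>
          i (Fin.last k) = lastIdx n hn).attach.filter (fun i => u = i.1)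
          = {⟨u, Finset.mem_filter.mpr ⟨Finset.mem_univ u, hu⟩⟩} := by
        ext i
        simp only [Finset.mem_filter, Finset.mem_attach, true_and, Finset.mem_singleton]
        constructor
        · intro hui
          exact Subtype.ext hui.symm
        · intro hui
          rw [hui]
      rw [this, Finset.sum_singleton]
    · have hx0 : (x : TP n (k+1)) u = 0 := x.2 u hu
      rw [hx0]
      symm
      apply Finset.sum_eq_zero
      intro i _
      rw [mul_ite, mul_one, mul_zero]
      split
      · next hui =>
        exfalso
        apply hu
        rw [hui]
        exact (Finset.mem_filter.mp i.2).2
      · rfl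
  ext x
  rw [hrep x, map_sum, map_sum]
  exact Finset.sum_congr rfl fun i _ => by
    rw [LinearMap.map_smul, LinearMap.map_smul, h]

end Aux4

section Aux5

lemma phiX_eq_zero {n t : ℕ} (d : SP t) (hbig : n < nBlocks d) : phiX n t d = 0 := by
  apply LinearMap.ext
  intro f
  funext o
  show ∑ i, coeX n t d (Sum.elim i o) * f i = 0
  rw [Finset.sum_eq_zero]
  intro i _
  rw [coeX_eq_ite, if_neg, zero_mul]
  intro hdk
  have h1 := nBlocks_ker_le (n := n) (Sum.elim i o)
  rw [← hdk] at h1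
  omega

lemma phiX_comm {r p n k : ℕ} (hr : 0 < r) (hp : 0 < p) (hpr : p ∣ r) (d : SP (k+1))
    (hd : inA r p n d) (g : Matrix (Fin n) (Fin n) ℂ) (hg : g ∈ GSet r p n) :
    phiX n (k+1) d ∘ₗ tensorPow n (k+1) g = tensorPow n (k+1) g ∘ₗ phiX n (k+1) d := by
  by_cases hbig : n < nBlocks d
  · rw [phiX_eq_zero d hbig, LinearMap.comp_zero, LinearMap.zero_comp]
  have hPiLam : inPi r d ∨ inLambda r p n d := by
    rcases hd with h | h | h
    · exact Or.inl h
    · exact Or.inr h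
    · exact absurd h.1 hbig
  obtain ⟨π, a, ha, hpa, rfl⟩ := hg
  have hdelta : ∀ i : Fin (k+1) → Fin n, deltaFn n (k+1) i = Pi.basisFun ℂ (Fin (k+1) → Fin n) i := by
    intro i
    funext j
    simp [deltaFn, Pi.basisFun_apply, Pi.single_apply]
  apply Module.Basis.ext (Pi.basisFun ℂ (Fin (k+1) → Fin n))
  intro i
  rw [← hdelta i]
  rw [LinearMap.comp_apply, LinearMap.comp_apply, tensorPow_monoMat_delta,
    LinearMap.map_smul, phiX_delta, phiX_delta]
  funext o
  rw [tensorPow_monoMat_apply]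
  show (∏ s, a (i s)) * coeX n (k+1) d (Sum.elim (fun s => π (i s)) o)
    = (∏ s, a (π⁻¹ (o s))) * coeX n (k+1) d (Sum.elim i fun s => π⁻¹ (o s))
  set o' : Fin (k+1) → Fin n := fun s => π⁻¹ (o s) with ho'
  have ho : o = fun s => π (o' s) := funext fun s => by rw [ho']; simp
  have helim : Sum.elim (fun s => π (i s)) o = fun x => π (Sum.elim i o' x) := by
    funext x
    cases x with
    | inl s => rfl
    | inr s => rw [ho]; rfl
  rw [helim, coeX_comp_perm, coeX_eq_ite]
  by_cases hdc : d = Setoid.ker (Sum.elim i o')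
  · rw [if_pos hdc, mul_one, mul_one]
    have hph := phase_eq hr hp hpr (Sum.elim i o') (by rw [← hdc]; exact hPiLam)
      a ha hpa
    exact hph
  · rw [if_neg hdc, mul_zero, mul_zero]

lemma restrict_comp_comm {n t : ℕ} {M : Submodule ℂ (TP n t)}
    (f g : TP n t →ₗ[ℂ] TP n t) (hf : ∀ x ∈ M, f x ∈ M) (hg : ∀ x ∈ M, g x ∈ M)
    (h : f ∘ₗ g = g ∘ₗ f) :
    f.restrict hf ∘ₗ g.restrict hg = g.restrict hg ∘ₗ f.restrict hf := by
  apply LinearMap.ext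
  intro x
  apply Subtype.ext
  show f (g x) = g (f x)
  have := LinearMap.ext_iff.mp h (x : TP n t)
  simpa using this

lemma diag_mem_LSet {r p n : ℕ} (hr : 0 < r) (hn : 0 < n) (a : Fin n → ℂ)
    (ha : ∀ v, a v ^ r = 1) (hpa : (∏ v, a v) ^ (r / p) = 1) :
    monoMat n 1 a ∈ LSet r p n hn := by
  refine ⟨⟨1, a, ha, hpa, rfl⟩, ?_⟩
  rw [monoMat_last_entry hn 1 a rfl]
  exact a_ne_zero hr (ha _)

lemma perm_mem_LSet {r p n : ℕ} (hr : 0 < r) (hn : 0 < n) (π : Equiv.Perm (Fin n))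
    (hπ : π (lastIdx n hn) = lastIdx n hn) :
    monoMat n π (fun _ => 1) ∈ LSet r p n hn := by
  refine ⟨⟨π, fun _ => 1, fun _ => one_pow r, by simp, rfl⟩, ?_⟩
  rw [monoMat_last_entry hn π _ hπ]
  exact one_ne_zero

lemma nBlocks_le_of_half {k : ℕ} (d : SP (k+1)) (hh : isHalf k d) :
    nBlocks d ≤ 2 * k + 1 := by
  have hsurj : Function.Surjective (fun x : Fin (k+1) ⊕ Fin k =>
      Sum.elim (fun a => Quotient.mk d (Sum.inl a))
        (fun b => Quotient.mk d (Sum.inr b.castSucc)) x) := by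
    intro q
    obtain ⟨x, rfl⟩ := q.exists_rep
    cases x with
    | inl a => exact ⟨Sum.inl a, rfl⟩
    | inr b =>
      by_cases hb : b = Fin.last k
      · refine ⟨Sum.inl (Fin.last k), ?_⟩
        show Quotient.mk d (Sum.inl (Fin.last k)) = Quotient.mk d (Sum.inr b)
        rw [hb]
        exact Quotient.sound hh
      · refine ⟨Sum.inr ⟨(b : ℕ), Fin.val_lt_last hb⟩, ?_⟩
        show Quotient.mk d (Sum.inr _) = Quotient.mk d (Sum.inr b)
        congr 1
  have h1 := Nat.card_le_card_of_surjective _ hsurj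
  have h2 : Nat.card (Fin (k+1) ⊕ Fin k) = 2 * k + 1 := by
    rw [Nat.card_sum]
    simp only [Nat.card_eq_fintype_card, Fintype.card_fin]
    omega
  rw [h2] at h1
  exact h1

lemma exists_realization {n k : ℕ} (hn : 0 < n) (d : SP (k+1)) (hh : isHalf k d)
    (hcard : nBlocks d ≤ n) :
    ∃ c : Fin (k+1) ⊕ Fin (k+1) → Fin n, Setoid.ker c = d ∧
      c (Sum.inl (Fin.last k)) = lastIdx n hn ∧
      c (Sum.inr (Fin.last k)) = lastIdx n hn := by
  letI : Fintype (Quotient d) := Fintype.ofFinite _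
  obtain ⟨ι⟩ : Nonempty (Quotient d ↪ Fin n) := by
    apply Function.Embedding.nonempty_of_card_le
    rw [Fintype.card_fin, ← Nat.card_eq_fintype_card]
    exact hcard
  set q0 : Quotient d := Quotient.mk d (Sum.inl (Fin.last k)) with hq0
  refine ⟨fun x => Equiv.swap (ι q0) (lastIdx n hn) (ι (Quotient.mk d x)), ?_, ?_, ?_⟩
  · apply Setoid.ext
    intro a b
    constructor
    · intro hab
      have h1 : ι (Quotient.mk d a) = ι (Quotient.mk d b) :=
        (Equiv.swap (ι q0) (lastIdx n hn)).injective hab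
      exact Quotient.exact (ι.injective h1)
    · intro hab
      show Equiv.swap _ _ (ι (Quotient.mk d a)) = Equiv.swap _ _ (ι (Quotient.mk d b))
      rw [Quotient.sound hab]
  · show Equiv.swap (ι q0) (lastIdx n hn) (ι q0) = lastIdx n hn
    exact Equiv.swap_apply_left _ _
  · have h1 : Quotient.mk d (Sum.inr (Fin.last k)) = q0 := (Quotient.sound hh).symm
    show Equiv.swap (ι q0) (lastIdx n hn) (ι (Quotient.mk d (Sum.inr (Fin.last k)))) = lastIdx n hn
    rw [h1]
    exact Equiv.swap_apply_left _ _

end Aux5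

section Aux6

variable {r p n k : ℕ}

lemma Fm_vanish (hr : 0 < r) (hp : 0 < p) (hn : 0 < n) (hpr : p ∣ r)
    (hLinv : ∀ g ∈ LSet r p n hn, ∀ f ∈ Wsub n k hn, tensorPow n (k+1) g f ∈ Wsub n k hn)
    (F : ↥(Wsub n k hn) →ₗ[ℂ] ↥(Wsub n k hn))
    (hF : ∀ g, ∀ hg : g ∈ LSet r p n hn,
      F ∘ₗ (tensorPow n (k+1) g).restrict (hLinv g hg)
        = (tensorPow n (k+1) g).restrict (hLinv g hg) ∘ₗ F)
    (c : Fin (k+1) ⊕ Fin (k+1) → Fin n)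
    (hc1 : (fun s => c (Sum.inl s)) (Fin.last k) = lastIdx n hn)
    (hnP : ¬ inPi r (Setoid.ker c)) (hnL : ¬ inLambda r p n (Setoid.ker c)) :
    (F (eW hn (fun s => c (Sum.inl s)) hc1) : TP n (k+1)) (fun s => c (Sum.inr s)) = 0 := by
  obtain ⟨a, ha, hpa, hne⟩ := exists_phase_ne hr hp hpr c hnP hnL
  have hg : monoMat n 1 a ∈ LSet r p n hn := diag_mem_LSet hr hn a ha hpa
  have heq := LinearMap.ext_iff.mp (hF (monoMat n 1 a) hg)
    (eW hn (fun s => c (Sum.inl s)) hc1)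
  have hGe : ((tensorPow n (k+1) (monoMat n 1 a)).restrict (hLinv _ hg))
      (eW hn (fun s => c (Sum.inl s)) hc1)
      = (∏ s, a (c (Sum.inl s))) • eW hn (fun s => c (Sum.inl s)) hc1 := by
    apply Subtype.ext
    show tensorPow n (k+1) (monoMat n 1 a) (deltaFn n (k+1) (fun s => c (Sum.inl s))) = _
    rw [tensorPow_monoMat_delta]
    rfl
  rw [LinearMap.comp_apply, LinearMap.comp_apply, hGe, LinearMap.map_smul] at heq
  have heval := congrFun (congrArg Subtype.val heq) (fun s => c (Sum.inr s))
  have hL : (((∏ s, a (c (Sum.inl s))) • F (eW hn (fun s => c (Sum.inl s)) hc1) :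
        ↥(Wsub n k hn)) : TP n (k+1)) (fun s => c (Sum.inr s))
      = (∏ s, a (c (Sum.inl s))) *
        (F (eW hn (fun s => c (Sum.inl s)) hc1) : TP n (k+1)) (fun s => c (Sum.inr s)) := rfl
  have hR : (((tensorPow n (k+1) (monoMat n 1 a)).restrict (hLinv _ hg)
        (F (eW hn (fun s => c (Sum.inl s)) hc1)) : ↥(Wsub n k hn)) : TP n (k+1))
        (fun s => c (Sum.inr s))
      = (∏ s, a (c (Sum.inr s))) *
        (F (eW hn (fun s => c (Sum.inl s)) hc1) : TP n (k+1)) (fun s => c (Sum.inr s)) := by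
    show tensorPow n (k+1) (monoMat n 1 a)
        ((F (eW hn (fun s => c (Sum.inl s)) hc1) : TP n (k+1))) (fun s => c (Sum.inr s)) = _
    rw [tensorPow_monoMat_apply]
    simp
  rw [hL, hR] at heval
  have hfin : ((∏ s, a (c (Sum.inl s))) - ∏ s, a (c (Sum.inr s))) *
      (F (eW hn (fun s => c (Sum.inl s)) hc1) : TP n (k+1)) (fun s => c (Sum.inr s)) = 0 := by
    rw [sub_mul, heval, sub_self]
  rcases mul_eq_zero.mp hfin with h | h
  · exact absurd (sub_eq_zero.mp h) hne
  · exact h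

lemma Fm_const (hr : 0 < r) (hp : 0 < p) (hn : 0 < n) (hpr : p ∣ r)
    (hLinv : ∀ g ∈ LSet r p n hn, ∀ f ∈ Wsub n k hn, tensorPow n (k+1) g f ∈ Wsub n k hn)
    (F : ↥(Wsub n k hn) →ₗ[ℂ] ↥(Wsub n k hn))
    (hF : ∀ g, ∀ hg : g ∈ LSet r p n hn,
      F ∘ₗ (tensorPow n (k+1) g).restrict (hLinv g hg)
        = (tensorPow n (k+1) g).restrict (hLinv g hg) ∘ₗ F)
    (c c' : Fin (k+1) ⊕ Fin (k+1) → Fin n)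
    (hc1 : (fun s => c (Sum.inl s)) (Fin.last k) = lastIdx n hn)
    (hc1' : (fun s => c' (Sum.inl s)) (Fin.last k) = lastIdx n hn)
    (hker : Setoid.ker c = Setoid.ker c') :
    (F (eW hn (fun s => c' (Sum.inl s)) hc1') : TP n (k+1)) (fun s => c' (Sum.inr s))
      = (F (eW hn (fun s => c (Sum.inl s)) hc1) : TP n (k+1)) (fun s => c (Sum.inr s)) := by
  have hl2 : ∀ a b, (Setoid.ker c).r a b → c' a = c' b := fun a b hab => by
    rw [hker] at hab
    exact hab
  have hg0inj : Function.Injective (Quotient.lift c' hl2 :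
      Quotient (Setoid.ker c) → Fin n) := fun q q' => Quotient.inductionOn₂ q q' (fun x y h => by
    apply Quotient.sound
    show (Setoid.ker c).r x y
    rw [hker]
    exact h)
  obtain ⟨π, hπ⟩ := exists_perm_comp (kerLift c) (Quotient.lift c' hl2)
    (kerLift_inj c) hg0inj
  have hπc : ∀ x, π (c x) = c' x := fun x => hπ (Quotient.mk _ x)
  have hπL : π (lastIdx n hn) = lastIdx n hn := by
    have h1 : c (Sum.inl (Fin.last k)) = lastIdx n hn := hc1
    have h2 : c' (Sum.inl (Fin.last k)) = lastIdx n hn := hc1'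
    calc π (lastIdx n hn) = π (c (Sum.inl (Fin.last k))) := by rw [h1]
    _ = c' (Sum.inl (Fin.last k)) := hπc _
    _ = lastIdx n hn := h2
  have hg : monoMat n π (fun _ => 1) ∈ LSet r p n hn := perm_mem_LSet hr hn π hπL
  have heq := LinearMap.ext_iff.mp (hF _ hg) (eW hn (fun s => c (Sum.inl s)) hc1)
  have hGe : ((tensorPow n (k+1) (monoMat n π (fun _ => 1))).restrict (hLinv _ hg))
      (eW hn (fun s => c (Sum.inl s)) hc1)
      = eW hn (fun s => c' (Sum.inl s)) hc1' := by
    apply Subtype.ext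
    show tensorPow n (k+1) (monoMat n π (fun _ => 1))
      (deltaFn n (k+1) (fun s => c (Sum.inl s))) = deltaFn n (k+1) (fun s => c' (Sum.inl s))
    rw [tensorPow_monoMat_delta]
    have h1 : (fun s => π (c (Sum.inl s))) = fun s => c' (Sum.inl s) :=
      funext fun s => hπc _
    rw [h1]
    simp
  rw [LinearMap.comp_apply, LinearMap.comp_apply, hGe] at heq
  have heval := congrFun (congrArg Subtype.val heq) (fun s => c' (Sum.inr s))
  have hR : (((tensorPow n (k+1) (monoMat n π (fun _ => 1))).restrict (hLinv _ hg)
        (F (eW hn (fun s => c (Sum.inl s)) hc1)) : ↥(Wsub n k hn)) : TP n (k+1))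
        (fun s => c' (Sum.inr s))
      = (F (eW hn (fun s => c (Sum.inl s)) hc1) : TP n (k+1)) (fun s => c (Sum.inr s)) := by
    show tensorPow n (k+1) (monoMat n π (fun _ => 1))
        ((F (eW hn (fun s => c (Sum.inl s)) hc1) : TP n (k+1))) (fun s => c' (Sum.inr s)) = _
    rw [tensorPow_monoMat_apply]
    have h2 : (fun s => π⁻¹ (c' (Sum.inr s))) = fun s => c (Sum.inr s) := by
      funext s
      rw [← hπc (Sum.inr s)]
      simp
    rw [h2]
    simp
  rw [hR] at heval
  exact heval

end Aux6

set_option maxHeartbeats 2000000 in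
/-- The span of the restrictions `φ_{k+1}(x_d)|_W`, for
`d ∈ A_{k+1/2}(r,p,n)`, equals the centralizer algebra `End_{L(r,p,n)}(W)`; the
restrictions with more than `n` blocks vanish; and for `n ≥ 2k+1` the family is
linearly independent.  (The invariance of `W` under the `φ`'s and under the diagonal
`L(r,p,n)`-action, a fact recorded in the paper, is supplied as a hypothesis so that
the restricted maps can be formed.) -/
theorem statement1 (r p n k : ℕ) (hr : 0 < r) (hp : 0 < p) (hn : 0 < n) (hpr : p ∣ r)
    (hinv : ∀ d : SP (k + 1), isHalf k d →
      ∀ f ∈ Wsub n k hn, phiX n (k + 1) d f ∈ Wsub n k hn)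
    (hLinv : ∀ g ∈ LSet r p n hn,
      ∀ f ∈ Wsub n k hn, tensorPow n (k + 1) g f ∈ Wsub n k hn) :
    ((Submodule.span ℂ {T : ↥(Wsub n k hn) →ₗ[ℂ] ↥(Wsub n k hn) |
        ∃ d : SP (k + 1), ∃ h : inA r p n d ∧ isHalf k d,
          T = (phiX n (k + 1) d).restrict (hinv d h.2)} :
        Submodule ℂ (↥(Wsub n k hn) →ₗ[ℂ] ↥(Wsub n k hn))) :
        Set (↥(Wsub n k hn) →ₗ[ℂ] ↥(Wsub n k hn)))
      = {F : ↥(Wsub n k hn) →ₗ[ℂ] ↥(Wsub n k hn) |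
          ∀ g, ∀ hg : g ∈ LSet r p n hn,
            F ∘ₗ (tensorPow n (k + 1) g).restrict (hLinv g hg)
              = (tensorPow n (k + 1) g).restrict (hLinv g hg) ∘ₗ F} ∧
    (∀ d : SP (k + 1), inA r p n d → ∀ hh : isHalf k d, n < nBlocks d →
        (phiX n (k + 1) d).restrict (hinv d hh) = 0) ∧
    (2 * k + 1 ≤ n →
      LinearIndependent ℂ fun d : {d : SP (k + 1) // inA r p n d ∧ isHalf k d} =>
        (phiX n (k + 1) d.1).restrict (hinv d.1 d.2.2)) := by
  classical
  refine ⟨?_, ?_, ?_⟩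
  · -- span = centralizer
    apply Set.Subset.antisymm
    · -- span ⊆ centralizer
      intro T hT
      simp only [SetLike.mem_coe] at hT
      simp only [Set.mem_setOf_eq]
      induction hT using Submodule.span_induction with
      | mem T hTmem =>
        obtain ⟨d, hd, rfl⟩ := hTmem
        intro g hg
        exact restrict_comp_comm _ _ _ _ (phiX_comm hr hp hpr d hd.1 g hg.1)
      | zero =>
        intro g hg
        rw [LinearMap.zero_comp, LinearMap.comp_zero]
      | add T1 T2 _ _ h1 h2 =>
        intro g hg
        rw [LinearMap.add_comp, LinearMap.comp_add, h1 g hg, h2 g hg]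
      | smul a T1 _ h1 =>
        intro g hg
        rw [LinearMap.smul_comp, LinearMap.comp_smul, h1 g hg]
    · -- centralizer ⊆ span
      intro F hF
      simp only [Set.mem_setOf_eq] at hF
      simp only [SetLike.mem_coe]
      set Good2 : Finset ((Fin (k+1) ⊕ Fin (k+1)) → Fin n) :=
        Finset.univ.filter (fun c => c (Sum.inl (Fin.last k)) = lastIdx n hn ∧
          c (Sum.inr (Fin.last k)) = lastIdx n hn) with hGood2
      have hG2 : ∀ c ∈ Good2, c (Sum.inl (Fin.last k)) = lastIdx n hn ∧
          c (Sum.inr (Fin.last k)) = lastIdx n hn :=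
        fun c hc => (Finset.mem_filter.mp hc).2
      have hG2' : ∀ c : (Fin (k+1) ⊕ Fin (k+1)) → Fin n,
          c (Sum.inl (Fin.last k)) = lastIdx n hn →
          c (Sum.inr (Fin.last k)) = lastIdx n hn → c ∈ Good2 :=
        fun c h1 h2 => Finset.mem_filter.mpr ⟨Finset.mem_univ c, h1, h2⟩
      have hhalfG2 : ∀ c ∈ Good2, isHalf k (Setoid.ker c) := by
        intro c hc
        show c (Sum.inl (Fin.last k)) = c (Sum.inr (Fin.last k))
        rw [(hG2 c hc).1, (hG2 c hc).2]
      set Fm : (Fin (k+1) → Fin n) → (Fin (k+1) → Fin n) → ℂ := fun o i =>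
        if hi : i (Fin.last k) = lastIdx n hn then (F (eW hn i hi) : TP n (k+1)) o else 0
        with hFm
      set Ncl : ((Fin (k+1) ⊕ Fin (k+1)) → Fin n) → ℕ := fun c =>
        (Good2.filter (fun c' => Setoid.ker c' = Setoid.ker c)).card with hNcl
      set PhiW : SP (k+1) → (↥(Wsub n k hn) →ₗ[ℂ] ↥(Wsub n k hn)) := fun d =>
        if h : isHalf k d then (phiX n (k+1) d).restrict (hinv d h) else 0 with hPhiW
      have hFmgood : ∀ (o i : Fin (k+1) → Fin n) (hi : i (Fin.last k) = lastIdx n hn),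
          Fm o i = (F (eW hn i hi) : TP n (k+1)) o := by
        intro o i hi
        rw [hFm]
        simp only
        rw [dif_pos hi]
      have hFmconst : ∀ c ∈ Good2, ∀ c0 ∈ Good2, Setoid.ker c = Setoid.ker c0 →
          Fm (fun s => c (Sum.inr s)) (fun s => c (Sum.inl s))
            = Fm (fun s => c0 (Sum.inr s)) (fun s => c0 (Sum.inl s)) := by
        intro c hc c0 hc0 hker
        rw [hFmgood (fun s => c (Sum.inr s)) (fun s => c (Sum.inl s)) ((hG2 c hc).1),
          hFmgood (fun s => c0 (Sum.inr s)) (fun s => c0 (Sum.inl s)) ((hG2 c0 hc0).1)]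
        exact Fm_const hr hp hn hpr hLinv F hF c0 c ((hG2 c0 hc0).1) ((hG2 c hc).1) hker.symm
      have hmain : F = ∑ c ∈ Good2,
          (Fm (fun s => c (Sum.inr s)) (fun s => c (Sum.inl s)) / (Ncl c : ℂ)) •
            PhiW (Setoid.ker c) := by
        apply W_ext hn
        intro j hj
        apply Subtype.ext
        funext o
        rw [LinearMap.sum_apply, Submodule.coe_sum, Finset.sum_apply]
        have hterm : ∀ c ∈ Good2,
            ((((Fm (fun s => c (Sum.inr s)) (fun s => c (Sum.inl s)) / (Ncl c : ℂ)) •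
              PhiW (Setoid.ker c)) (eW hn j hj) : ↥(Wsub n k hn)) : TP n (k+1)) o
            = (Fm (fun s => c (Sum.inr s)) (fun s => c (Sum.inl s)) / (Ncl c : ℂ)) *
              (if Setoid.ker c = Setoid.ker (Sum.elim j o) then 1 else 0) := by
          intro c hc
          have hcoe : ((PhiW (Setoid.ker c) (eW hn j hj) : ↥(Wsub n k hn)) : TP n (k+1)) o
              = if Setoid.ker c = Setoid.ker (Sum.elim j o) then 1 else 0 := by
            rw [hPhiW]
            simp only
            rw [dif_pos (hhalfG2 c hc)]
            show (phiX n (k+1) (Setoid.ker c) (deltaFn n (k+1) j)) o = _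
            rw [phiX_delta]
            exact coeX_eq_ite n (k+1) _ _
          have hsm : ((((Fm (fun s => c (Sum.inr s)) (fun s => c (Sum.inl s)) / (Ncl c : ℂ)) •
              PhiW (Setoid.ker c)) (eW hn j hj) : ↥(Wsub n k hn)) : TP n (k+1)) o
              = (Fm (fun s => c (Sum.inr s)) (fun s => c (Sum.inl s)) / (Ncl c : ℂ)) *
                ((PhiW (Setoid.ker c) (eW hn j hj) : ↥(Wsub n k hn)) : TP n (k+1)) o := rfl
          rw [hsm, hcoe]
        rw [Finset.sum_congr rfl hterm]
        by_cases ho : o (Fin.last k) = lastIdx n hn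
        · have hc0 : Sum.elim j o ∈ Good2 := hG2' _ hj ho
          have hLHS : ((F (eW hn j hj) : ↥(Wsub n k hn)) : TP n (k+1)) o = Fm o j :=
            (hFmgood o j hj).symm
          rw [hLHS]
          rw [Finset.sum_congr rfl (fun c _ => by rw [mul_ite, mul_one, mul_zero]),
            ← Finset.sum_filter]
          have hclsval : ∀ c ∈ Good2.filter
              (fun c => Setoid.ker c = Setoid.ker (Sum.elim j o)),
              Fm (fun s => c (Sum.inr s)) (fun s => c (Sum.inl s)) / (Ncl c : ℂ)
                = Fm o j / (Ncl (Sum.elim j o) : ℂ) := by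
            intro c hcmem
            obtain ⟨hcg, hck⟩ := Finset.mem_filter.mp hcmem
            have h1 := hFmconst c hcg (Sum.elim j o) hc0 hck
            have h2 : Ncl c = Ncl (Sum.elim j o) := by
              rw [hNcl]
              simp only
              congr 1
              apply Finset.filter_congr
              intro c' _
              rw [hck]
            have h3 : (fun s => Sum.elim j o (Sum.inr s)) = o := rfl
            have h4 : (fun s => Sum.elim j o (Sum.inl s)) = j := rfl
            rw [h1, h2, h3, h4]
          rw [Finset.sum_congr rfl hclsval, Finset.sum_const]
          have hcard : (Good2.filter
              (fun c => Setoid.ker c = Setoid.ker (Sum.elim j o))).card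
              = Ncl (Sum.elim j o) := rfl
          rw [hcard, nsmul_eq_mul]
          have hNne : ((Ncl (Sum.elim j o) : ℕ) : ℂ) ≠ 0 := by
            rw [Nat.cast_ne_zero]
            apply Finset.card_ne_zero_of_mem
            exact Finset.mem_filter.mpr ⟨hc0, rfl⟩
          field_simp
        · have hLHS : ((F (eW hn j hj) : ↥(Wsub n k hn)) : TP n (k+1)) o = 0 :=
            (F (eW hn j hj)).2 o ho
          rw [hLHS]
          symm
          apply Finset.sum_eq_zero
          intro c hc
          rw [if_neg, mul_zero]
          intro hkk
          apply ho
          have h1 : (Setoid.ker c).r (Sum.inl (Fin.last k)) (Sum.inr (Fin.last k)) :=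
            hhalfG2 c hc
          rw [hkk] at h1
          have h2 : j (Fin.last k) = o (Fin.last k) := h1
          rw [← h2]
          exact hj
      rw [hmain]
      apply Submodule.sum_mem
      intro c hc
      by_cases hA : inA r p n (Setoid.ker c)
      · apply Submodule.smul_mem
        apply Submodule.subset_span
        refine ⟨Setoid.ker c, ⟨hA, hhalfG2 c hc⟩, ?_⟩
        rw [hPhiW]
        simp only
        rw [dif_pos (hhalfG2 c hc)]
      · have h0 : Fm (fun s => c (Sum.inr s)) (fun s => c (Sum.inl s)) = 0 := by
          rw [hFmgood (fun s => c (Sum.inr s)) (fun s => c (Sum.inl s)) ((hG2 c hc).1)]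
          refine Fm_vanish hr hp hn hpr hLinv F hF c ((hG2 c hc).1) ?_ ?_
          · intro h
            exact hA (Or.inl h)
          · intro h
            exact hA (Or.inr (Or.inl h))
        rw [h0, zero_div, zero_smul]
        exact Submodule.zero_mem _
  · -- part 2 : vanishing for more than n blocks
    intro d _ hh hbig
    apply LinearMap.ext
    intro x
    apply Subtype.ext
    show phiX n (k+1) d (x : TP n (k+1))
      = (((0 : ↥(Wsub n k hn) →ₗ[ℂ] ↥(Wsub n k hn)) x : ↥(Wsub n k hn)) : TP n (k+1))
    rw [phiX_eq_zero d hbig]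
    rfl
  · -- part 3 : linear independence
    intro hnk
    set vv : {d : SP (k + 1) // inA r p n d ∧ isHalf k d} →
        (↥(Wsub n k hn) →ₗ[ℂ] ↥(Wsub n k hn)) :=
      fun d => (phiX n (k + 1) d.1).restrict (hinv d.1 d.2.2) with hvv
    show Function.Injective (Finsupp.linearCombination ℂ vv)
    have key : ∀ s : Finset {d : SP (k + 1) // inA r p n d ∧ isHalf k d},
        ∀ g : {d : SP (k + 1) // inA r p n d ∧ isHalf k d} → ℂ,
        ∑ d' ∈ s, g d' • vv d' = 0 → ∀ d ∈ s, g d = 0 := by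
      intro s g hsum d hd
      have hble : nBlocks d.1 ≤ n := le_trans (nBlocks_le_of_half d.1 d.2.2) hnk
      obtain ⟨c, hker, hc1, hc2⟩ := exists_realization hn d.1 d.2.2 hble
      have hi : (fun s' => c (Sum.inl s')) (Fin.last k) = lastIdx n hn := hc1
      have heval := congrFun (congrArg Subtype.val
        (LinearMap.congr_fun hsum (eW hn (fun s' => c (Sum.inl s')) hi)))
        (fun s' => c (Sum.inr s'))
      have helim : Sum.elim (fun s' => c (Sum.inl s')) (fun s' => c (Sum.inr s')) = c := by
        funext x
        cases x <;> rfl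
      have hLHS : (((∑ d' ∈ s, g d' • vv d')
            (eW hn (fun s' => c (Sum.inl s')) hi) : ↥(Wsub n k hn)) : TP n (k+1))
            (fun s' => c (Sum.inr s'))
          = ∑ d' ∈ s, g d' * (if d' = d then 1 else 0) := by
        rw [LinearMap.sum_apply, Submodule.coe_sum, Finset.sum_apply]
        refine Finset.sum_congr rfl fun d' _ => ?_
        have h1 : (((g d' • vv d')
              (eW hn (fun s' => c (Sum.inl s')) hi) : ↥(Wsub n k hn)) : TP n (k+1))
              (fun s' => c (Sum.inr s'))
            = g d' * (phiX n (k+1) d'.1 (deltaFn n (k+1) (fun s' => c (Sum.inl s'))))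
                (fun s' => c (Sum.inr s')) := rfl
        rw [h1, phiX_delta]
        congr 1
        show coeX n (k+1) d'.1
          (Sum.elim (fun s' => c (Sum.inl s')) (fun s' => c (Sum.inr s'))) = _
        rw [helim, coeX_eq_ite, hker]
        have h2 : (d'.1 = d.1) = (d' = d) :=
          propext ⟨fun h => Subtype.ext h, fun h => by rw [h]⟩
        rw [h2]
        congr
      rw [hLHS] at heval
      have hz : ∑ d' ∈ s, g d' * (if d' = d then 1 else 0) = 0 := by
        rw [heval]
        rfl
      rw [Finset.sum_congr rfl (fun d' _ => by rw [mul_ite, mul_one, mul_zero]),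
        Finset.sum_ite_eq' s d g, if_pos hd] at hz
      exact hz
    have h1 : ∀ l : {d : SP (k + 1) // inA r p n d ∧ isHalf k d} →₀ ℂ,
        Finsupp.linearCombination ℂ vv l = 0 → l = 0 := by
      intro l hl0
      have h2 : ∑ d' ∈ l.support, l d' • vv d' = 0 := by
        rw [Finsupp.linearCombination_apply] at hl0
        exact hl0
      have h3 := key l.support l h2
      apply Finsupp.ext
      intro d
      by_cases hd : d ∈ l.support
      · exact h3 d hd
      · exact Finsupp.notMem_support_iff.mp hd
    intro l1 l2 hl
    have h0 : Finsupp.linearCombination ℂ vv (l1 - l2) = 0 := by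
      rw [map_sub, hl, sub_self]
    have h4 := h1 _ h0
    exact sub_eq_zero.mp h4


end Tanabe
end
end

section
/- Let k be a positive integer and set n = 2k. Let C_1 and C_2 be the conjugacy classes of c_1 and c_2, respectively, in G(2,2,2k). Then, as endomorphisms of V^{⊗k} = (ℂ^{2k})^{⊗k}, Σ_{g ∈ C_2} g^{⊗k} − Σ_{g ∈ C_1} g^{⊗k} = 2^k · M_{k,2,2}. -/
open scoped Classical
open Matrix

noncomputable section

namespace Tanabe

/-! ## Group structure -/

theorem _root_.Equiv.Perm.inv_apply_self {α : Type*} (f : Equiv.Perm α) (x : α) : f⁻¹ (f x) = x :=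
  Equiv.symm_apply_apply f x

theorem _root_.Equiv.Perm.apply_inv_self {α : Type*} (f : Equiv.Perm α) (x : α) : f (f⁻¹ x) = x :=
  Equiv.apply_symm_apply f x

/-! ### Auxiliary development for statement17 -/

section Stmt17Aux

open Equiv Finset

variable {m : ℕ}

/-- Fixed-point-free involution. -/
def IsI (π : Equiv.Perm (Fin m)) : Prop := (∀ x, π (π x) = x) ∧ ∀ x, π x ≠ x

/-- All values are `±1`. -/
def Sgns (a : Fin m → ℂ) : Prop := ∀ i, a i = 1 ∨ a i = -1

/-- `a` is constant on the cycles of `π`. -/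
def Cst (π : Equiv.Perm (Fin m)) (a : Fin m → ℂ) : Prop := ∀ x, a (π x) = a x

/-- The set of smaller elements of the 2-cycles of `π`. -/
def reps (π : Equiv.Perm (Fin m)) : Finset (Fin m) := univ.filter fun x => x < π x

/-- The smaller element of the cycle of `x`. -/
def repOf (π : Equiv.Perm (Fin m)) (x : Fin m) : Fin m := if x < π x then x else π x

lemma mem_reps {π : Equiv.Perm (Fin m)} {x : Fin m} : x ∈ reps π ↔ x < π x := by
  simp [reps]

lemma lt_or_lt_of_isI {π : Equiv.Perm (Fin m)} (h : IsI π) (x : Fin m) :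
    x < π x ∨ π x < x := by
  rcases lt_trichotomy x (π x) with h1 | h1 | h1
  · exact Or.inl h1
  · exact absurd h1.symm (h.2 x)
  · exact Or.inr h1

lemma repOf_mem {π : Equiv.Perm (Fin m)} (h : IsI π) (x : Fin m) :
    repOf π x ∈ reps π := by
  unfold repOf
  rcases lt_or_lt_of_isI h x with h1 | h1
  · rw [if_pos h1]; exact mem_reps.2 h1
  · rw [if_neg (not_lt.2 h1.le)]
    exact mem_reps.2 (by rw [h.1 x]; exact h1)

lemma repOf_cases (π : Equiv.Perm (Fin m)) (x : Fin m) :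
    repOf π x = x ∨ repOf π x = π x := by
  unfold repOf; split_ifs <;> simp

lemma repOf_apply {π : Equiv.Perm (Fin m)} (h : IsI π) (x : Fin m) :
    repOf π (π x) = repOf π x := by
  unfold repOf
  rw [h.1 x]
  rcases lt_or_lt_of_isI h x with h1 | h1
  · rw [if_neg (not_lt.2 h1.le), if_pos h1]
  · rw [if_pos h1, if_neg (not_lt.2 h1.le)]

lemma repOf_of_mem {π : Equiv.Perm (Fin m)} {x : Fin m} (hx : x ∈ reps π) :
    repOf π x = x := by
  unfold repOf; rw [if_pos (mem_reps.1 hx)]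

lemma cst_repOf {π : Equiv.Perm (Fin m)} {a : Fin m → ℂ} (ha : Cst π a) (x : Fin m) :
    a (repOf π x) = a x := by
  rcases repOf_cases π x with h1 | h1 <;> rw [h1]
  exact ha x

lemma reps_image_eq {π : Equiv.Perm (Fin m)} (h : IsI π) :
    (reps π).image π = univ.filter fun x => π x < x := by
  ext y
  simp only [Finset.mem_image, mem_reps, Finset.mem_filter, Finset.mem_univ, true_and]
  constructor
  · rintro ⟨ρ, hρ, rfl⟩; rw [h.1 ρ]; exact hρ
  · intro hy; exact ⟨π y, by rw [h.1 y]; exact ⟨hy, rfl⟩⟩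

lemma filter_not_reps {π : Equiv.Perm (Fin m)} (h : IsI π) :
    (univ.filter fun x => ¬ x < π x) = univ.filter fun x => π x < x := by
  apply Finset.filter_congr
  intro x _
  constructor
  · intro hx
    rcases lt_or_lt_of_isI h x with h1 | h1
    · exact absurd h1 hx
    · exact h1
  · intro hx; exact not_lt.2 hx.le

/-- Product over all of `Fin m` as a product over 2-cycles. -/
lemma prod_pairs {π : Equiv.Perm (Fin m)} (h : IsI π) (f : Fin m → ℂ) :
    ∏ x, f x = ∏ ρ ∈ reps π, f ρ * f (π ρ) := by
  rw [Finset.prod_mul_distrib]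
  have h2 : ∏ ρ ∈ reps π, f (π ρ) = ∏ y ∈ (reps π).image π, f y :=
    (Finset.prod_image (fun x _ y _ hxy => π.injective hxy)).symm
  rw [h2, reps_image_eq h, ← filter_not_reps h, reps,
    Finset.prod_filter_mul_prod_filter_not]

lemma card_reps_aux {π : Equiv.Perm (Fin m)} (h : IsI π) :
    (reps π).card * 2 = m := by
  have h1 : (reps π).card + (univ.filter fun x => ¬ x < π x).card = m := by
    rw [reps, Finset.card_filter_add_card_filter_not]
    simp
  rw [filter_not_reps h, ← reps_image_eq h,
    Finset.card_image_of_injective _ π.injective] at h1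
  omega

lemma sgns_prod {a : Fin m → ℂ} (ha : Sgns a) (s : Finset (Fin m)) :
    (∏ ρ ∈ s, a ρ) = 1 ∨ (∏ ρ ∈ s, a ρ) = -1 := by
  refine Finset.prod_induction a (fun x => x = 1 ∨ x = -1) ?_ (Or.inl rfl)
    (fun i _ => ha i)
  rintro x y (rfl | rfl) (rfl | rfl) <;> norm_num

lemma sgns_mul_self {a : ℂ} (ha : a = 1 ∨ a = -1) : a * a = 1 := by
  rcases ha with rfl | rfl <;> norm_num

end Stmt17Aux


section Stmt17B

open Equiv Finset

variable {m : ℕ}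

lemma monoMat_apply (π : Equiv.Perm (Fin m)) (a : Fin m → ℂ) (i j : Fin m) :
    monoMat m π a i j = if i = π j then a j else 0 := rfl

lemma monoMat_inj {π π' : Equiv.Perm (Fin m)} {a a' : Fin m → ℂ}
    (ha : ∀ i, a i ≠ 0) (hM : monoMat m π a = monoMat m π' a') : π = π' ∧ a = a' := by
  have key : ∀ j, π j = π' j ∧ a j = a' j := by
    intro j
    have h1 := congrFun (congrFun hM (π j)) j
    rw [monoMat_apply, monoMat_apply, if_pos rfl] at h1
    by_cases h2 : π j = π' j
    · rw [if_pos h2] at h1; exact ⟨h2, h1⟩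
    · rw [if_neg h2] at h1; exact absurd h1 (ha j)
  exact ⟨Equiv.ext fun j => (key j).1, funext fun j => (key j).2⟩

lemma monoMat_mem_GSet {π : Equiv.Perm (Fin m)} {a : Fin m → ℂ}
    (hI : IsI π) (hs : Sgns a) (hc : Cst π a) : monoMat m π a ∈ GSet 2 2 m := by
  refine ⟨π, a, fun i => by rw [pow_two]; exact sgns_mul_self (hs i), ?_, rfl⟩
  have h1 : (∏ i, a i) = 1 := by
    rw [prod_pairs hI a]
    refine Finset.prod_eq_one fun ρ _ => ?_
    rw [hc ρ]
    exact sgns_mul_self (hs ρ)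
  rw [h1, one_pow]

lemma conj_eq (σ π₀ : Equiv.Perm (Fin m)) (b a₀ : Fin m → ℂ) (hb : ∀ j, b j * b j = 1) :
    monoMat m σ b * monoMat m π₀ a₀ =
      monoMat m (σ * π₀ * σ⁻¹) (fun j => b (π₀ (σ⁻¹ j)) * a₀ (σ⁻¹ j) * b (σ⁻¹ j)) *
        monoMat m σ b := by
  rw [monoMat_mul, monoMat_mul]
  have hperm : σ * π₀ * σ⁻¹ * σ = σ * π₀ := by group
  rw [hperm]
  have hw : (fun j => b (π₀ (σ⁻¹ (σ j))) * a₀ (σ⁻¹ (σ j)) * b (σ⁻¹ (σ j)) * b j) =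
      fun j => b (π₀ j) * a₀ j := by
    funext j
    simp only [Equiv.Perm.inv_apply_self]
    rw [mul_assoc, hb j, mul_one]
  exact congrArg (monoMat m (σ * π₀)) hw.symm

lemma sgn_transport {π₀ π' σ : Equiv.Perm (Fin m)}
    {b a₀ a' : Fin m → ℂ} (hI : IsI π₀) (hbs : Sgns b) (ha₀ : Sgns a₀) (hc₀ : Cst π₀ a₀)
    (hπ' : ∀ x, π' x = σ (π₀ (σ⁻¹ x)))
    (ha' : ∀ j, a' j = b (π₀ (σ⁻¹ j)) * a₀ (σ⁻¹ j) * b (σ⁻¹ j)) :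
    IsI π' ∧ Cst π' a' ∧ Sgns a' ∧
    (∏ ρ ∈ reps π', a' ρ) = (∏ j, b j) * ∏ ρ ∈ reps π₀, a₀ ρ := by
  have hps : ∀ x, π' (σ x) = σ (π₀ x) := by
    intro x; rw [hπ' (σ x), Equiv.Perm.inv_apply_self]
  have hI' : IsI π' := by
    constructor
    · intro x
      rw [hπ' x, hps (π₀ (σ⁻¹ x)), hI.1 (σ⁻¹ x), Equiv.Perm.apply_inv_self]
    · intro x hx
      rw [hπ' x] at hx
      have h2 : π₀ (σ⁻¹ x) = σ⁻¹ x := by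
        have h3 := congrArg (fun y => σ⁻¹ y) hx
        simpa using h3
      exact hI.2 _ h2
  have has : ∀ ρ, a' (σ ρ) = b (π₀ ρ) * a₀ ρ * b ρ := by
    intro ρ; rw [ha' (σ ρ), Equiv.Perm.inv_apply_self]
  have hc' : Cst π' a' := by
    intro x
    rw [ha' (π' x), ha' x]
    have h3 : σ⁻¹ (π' x) = π₀ (σ⁻¹ x) := by
      rw [hπ' x, Equiv.Perm.inv_apply_self]
    rw [h3, hI.1 (σ⁻¹ x), hc₀ (σ⁻¹ x)]
    ring
  have hs' : Sgns a' := by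
    intro j
    rw [ha' j]
    rcases hbs (π₀ (σ⁻¹ j)) with h1 | h1 <;> rcases ha₀ (σ⁻¹ j) with h2 | h2 <;>
      rcases hbs (σ⁻¹ j) with h3 | h3 <;> rw [h1, h2, h3] <;> norm_num
  refine ⟨hI', hc', hs', ?_⟩
  have hbij : ∏ ρ ∈ reps π', a' ρ = ∏ ρ ∈ reps π₀, a' (σ ρ) := by
    refine Finset.prod_nbij' (fun ρ' => repOf π₀ (σ⁻¹ ρ')) (fun ρ => repOf π' (σ ρ))
      (fun ρ' _ => repOf_mem hI _) (fun ρ _ => repOf_mem hI' _) ?_ ?_ ?_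
    · intro ρ' hρ'
      show repOf π' (σ (repOf π₀ (σ⁻¹ ρ'))) = ρ'
      rcases repOf_cases π₀ (σ⁻¹ ρ') with h1 | h1 <;> rw [h1]
      · rw [Equiv.Perm.apply_inv_self]
        exact repOf_of_mem hρ'
      · rw [← hps, Equiv.Perm.apply_inv_self, repOf_apply hI', repOf_of_mem hρ']
    · intro ρ hρ
      show repOf π₀ (σ⁻¹ (repOf π' (σ ρ))) = ρ
      rcases repOf_cases π' (σ ρ) with h1 | h1 <;> rw [h1]
      · rw [Equiv.Perm.inv_apply_self]
        exact repOf_of_mem hρ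
      · rw [hps, Equiv.Perm.inv_apply_self, repOf_apply hI, repOf_of_mem hρ]
    · intro ρ' _
      show a' ρ' = a' (σ (repOf π₀ (σ⁻¹ ρ')))
      rcases repOf_cases π₀ (σ⁻¹ ρ') with h1 | h1 <;> rw [h1]
      · rw [Equiv.Perm.apply_inv_self]
      · rw [← hps, Equiv.Perm.apply_inv_self]
        exact (hc' ρ').symm
  rw [hbij]
  have h4 : ∀ ρ ∈ reps π₀, a' (σ ρ) = (b ρ * b (π₀ ρ)) * a₀ ρ := by
    intro ρ _; rw [has ρ]; ring
  rw [Finset.prod_congr rfl h4, Finset.prod_mul_distrib, prod_pairs hI b]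

end Stmt17B


section Stmt17C

open Equiv Finset

/-- The explicit description of a conjugacy class. -/
def ESet (k : ℕ) (s : ℂ) : Set (Matrix (Fin (2*k)) (Fin (2*k)) ℂ) :=
  {M | ∃ (π : Equiv.Perm (Fin (2*k))) (a : Fin (2*k) → ℂ),
    IsI π ∧ Sgns a ∧ Cst π a ∧ (∏ ρ ∈ reps π, a ρ) = s ∧ M = monoMat (2*k) π a}

variable {k : ℕ}

lemma pairPerm_apply (x : Fin (2*k)) : pairPerm k x = pairFn k x := rfl

lemma pairFn_val_even {x : Fin (2*k)} (h : (x:ℕ) % 2 = 0) :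
    (pairFn k x : ℕ) = (x:ℕ) + 1 := by
  unfold pairFn
  rw [dif_pos h]

lemma pairFn_val_odd {x : Fin (2*k)} (h : ¬ (x:ℕ) % 2 = 0) :
    (pairFn k x : ℕ) = (x:ℕ) - 1 := by
  unfold pairFn
  rw [dif_neg h]

lemma isI_pair : IsI (pairPerm k) := by
  constructor
  · intro x; exact pairFn_invol k x
  · intro x hx
    have hv := congrArg Fin.val hx
    rw [pairPerm_apply] at hv
    by_cases h : (x:ℕ) % 2 = 0
    · rw [pairFn_val_even h] at hv; omega
    · rw [pairFn_val_odd h] at hv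
      omega

lemma mem_reps_pair {x : Fin (2*k)} : x ∈ reps (pairPerm k) ↔ (x:ℕ) % 2 = 0 := by
  rw [mem_reps]
  rw [Fin.lt_def, pairPerm_apply]
  by_cases h : (x:ℕ) % 2 = 0
  · rw [pairFn_val_even h]; simp [h]
  · rw [pairFn_val_odd h]
    simp only [h, iff_false, not_lt]
    omega

lemma pair_lt_two {x : Fin (2*k)} : (pairPerm k x : ℕ) < 2 ↔ (x:ℕ) < 2 := by
  rw [pairPerm_apply]
  by_cases h : (x:ℕ) % 2 = 0
  · rw [pairFn_val_even h]; omega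
  · rw [pairFn_val_odd h]; omega

lemma c1Mat_eq : c1Mat k = monoMat (2*k)
    (pairPerm k) (fun j => if (j:ℕ) < 2 then (-1 : ℂ) else 1) := by
  ext i j
  rw [c1Mat, dMat, c2Mat]
  rw [Matrix.diagonal_mul]
  rw [monoMat_apply, monoMat_apply]
  by_cases h : i = pairPerm k j
  · rw [if_pos h, if_pos h, mul_one, h]
    by_cases h2 : (j:ℕ) < 2
    · rw [if_pos (pair_lt_two.2 h2), if_pos h2]
    · rw [if_neg (fun hc => h2 (pair_lt_two.1 hc)), if_neg h2]
  · rw [if_neg h, if_neg h, mul_zero]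

lemma cst_c1 : Cst (pairPerm k) (fun j => if (j:ℕ) < 2 then (-1 : ℂ) else 1) := by
  intro x
  by_cases h2 : (x:ℕ) < 2
  · simp only [h2, if_true, pair_lt_two.2 h2, if_true]
  · simp only [h2, if_false]
    rw [if_neg (fun hc => h2 (pair_lt_two.1 hc))]

lemma sgns_c1 : Sgns (fun j : Fin (2*k) => if (j:ℕ) < 2 then (-1 : ℂ) else 1) := by
  intro i; by_cases h : (i:ℕ) < 2 <;> simp [h]

lemma prod_reps_c1 (hk : 0 < k) :
    (∏ ρ ∈ reps (pairPerm k), (fun j : Fin (2*k) => if (j:ℕ) < 2 then (-1 : ℂ) else 1) ρ)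
      = -1 := by
  have h02 : 0 < 2*k := by omega
  have h1 : ∀ ρ ∈ reps (pairPerm k),
      (fun j : Fin (2*k) => if (j:ℕ) < 2 then (-1 : ℂ) else 1) ρ =
      (if ρ = (⟨0, h02⟩ : Fin (2*k)) then (-1 : ℂ) else 1) := by
    intro ρ hρ
    have he : (ρ:ℕ) % 2 = 0 := mem_reps_pair.1 hρ
    simp only
    by_cases h2 : (ρ:ℕ) < 2
    · rw [if_pos h2, if_pos (show ρ = ⟨0, h02⟩ from Fin.ext (by simp only [Fin.val_mk]; omega))]
    · rw [if_neg h2,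
        if_neg (fun hc => h2 (by rw [hc]; simp only [Fin.val_mk]; omega))]
  rw [Finset.prod_congr rfl h1, Finset.prod_ite_eq']
  rw [if_pos (mem_reps_pair.2 (by simp only [Fin.val_mk]))]

/-- Forward inclusion: the conjugacy class is contained in the explicit set. -/
lemma conjClass_subset_ESet {a₀ : Fin (2*k) → ℂ} (hs₀ : Sgns a₀)
    (hc₀ : Cst (pairPerm k) a₀) :
    conjClass 2 2 (2*k) (monoMat (2*k) (pairPerm k) a₀) ⊆
      ESet k (∏ ρ ∈ reps (pairPerm k), a₀ ρ) := by
  rintro h ⟨hG, g, hgG, hcomm⟩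
  obtain ⟨σ, b, hb2, hbp, rfl⟩ := hgG
  have hbmul : ∀ j, b j * b j = 1 := by
    intro j; have := hb2 j; rwa [pow_two] at this
  have hbs : Sgns b := fun j => mul_self_eq_one_iff.1 (hbmul j)
  have hbne : ∀ j, b j ≠ 0 := by
    intro j
    rcases hbs j with h1 | h1 <;> rw [h1] <;> norm_num
  have hbprod : (∏ j, b j) = 1 := by
    have h22 : (2 : ℕ) / 2 = 1 := rfl
    rwa [h22, pow_one] at hbp
  have hce := conj_eq σ (pairPerm k) b a₀ hbmul
  rw [hcomm] at hce
  have hginv := monoMat_mul_inv (2*k) σ b hbne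
  have hM : h = monoMat (2*k) (σ * pairPerm k * σ⁻¹)
      (fun j => b (pairPerm k (σ⁻¹ j)) * a₀ (σ⁻¹ j) * b (σ⁻¹ j)) := by
    calc h = h * (monoMat (2*k) σ b * monoMat (2*k) σ⁻¹ (fun j => (b (σ⁻¹ j))⁻¹)) := by
            rw [hginv, mul_one]
      _ = (h * monoMat (2*k) σ b) * monoMat (2*k) σ⁻¹ (fun j => (b (σ⁻¹ j))⁻¹) :=
            (mul_assoc _ _ _).symm
      _ = (monoMat (2*k) (σ * pairPerm k * σ⁻¹)
            (fun j => b (pairPerm k (σ⁻¹ j)) * a₀ (σ⁻¹ j) * b (σ⁻¹ j)) *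
              monoMat (2*k) σ b) * monoMat (2*k) σ⁻¹ (fun j => (b (σ⁻¹ j))⁻¹) := by
            rw [hce]
      _ = monoMat (2*k) (σ * pairPerm k * σ⁻¹)
            (fun j => b (pairPerm k (σ⁻¹ j)) * a₀ (σ⁻¹ j) * b (σ⁻¹ j)) *
              (monoMat (2*k) σ b * monoMat (2*k) σ⁻¹ (fun j => (b (σ⁻¹ j))⁻¹)) :=
            mul_assoc _ _ _
      _ = _ := by rw [hginv, mul_one]
  obtain ⟨hI', hc', hs', hprod'⟩ := sgn_transport (π' := σ * pairPerm k * σ⁻¹) (σ := σ)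
    (a' := fun j => b (pairPerm k (σ⁻¹ j)) * a₀ (σ⁻¹ j) * b (σ⁻¹ j))
    isI_pair hbs hs₀ hc₀ (fun x => rfl) (fun j => rfl)
  exact ⟨_, _, hI', hs', hc', by rw [hprod', hbprod, one_mul], hM⟩

/-- Backward inclusion. -/
lemma ESet_subset_conjClass {a₀ : Fin (2*k) → ℂ} (hs₀ : Sgns a₀)
    (hc₀ : Cst (pairPerm k) a₀) :
    ESet k (∏ ρ ∈ reps (pairPerm k), a₀ ρ) ⊆
      conjClass 2 2 (2*k) (monoMat (2*k) (pairPerm k) a₀) := by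
  rintro M ⟨π, a, hI, hsa, hca, hprod, rfl⟩
  have hcard : (reps π).card = k := by
    have := card_reps_aux hI; omega
  set e := (reps π).orderIsoOfFin hcard with he
  set r : Fin k → Fin (2*k) := fun t => ((e t : {x // x ∈ reps π}) : Fin (2*k)) with hr
  have hrmem : ∀ t, r t ∈ reps π := fun t => (e t).2
  have hrlt : ∀ t, r t < π (r t) := fun t => mem_reps.1 (hrmem t)
  have hrinj : Function.Injective r := by
    intro t t' h
    exact e.injective (Subtype.ext h)
  have half : ∀ j : Fin (2*k), (j:ℕ)/2 < k := fun j => by have := j.2; omega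
  set σf : Fin (2*k) → Fin (2*k) :=
    fun j => if (j:ℕ) % 2 = 0 then r ⟨(j:ℕ)/2, half j⟩ else π (r ⟨(j:ℕ)/2, half j⟩)
    with hσf
  have hσf_even : ∀ j : Fin (2*k), (j:ℕ) % 2 = 0 → σf j = r ⟨(j:ℕ)/2, half j⟩ := by
    intro j h; rw [hσf]; simp only [h, if_true]
  have hσf_odd : ∀ j : Fin (2*k), ¬ ((j:ℕ) % 2 = 0) → σf j = π (r ⟨(j:ℕ)/2, half j⟩) := by
    intro j h; rw [hσf]; simp only [h, if_false]
  have hσinj : Function.Injective σf := by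
    intro j j' hjj
    by_cases h1 : (j:ℕ) % 2 = 0 <;> by_cases h2 : (j':ℕ) % 2 = 0
    · rw [hσf_even j h1, hσf_even j' h2] at hjj
      have h3 := congrArg Fin.val (hrinj hjj)
      simp only [Fin.val_mk] at h3
      exact Fin.ext (by omega)
    · rw [hσf_even j h1, hσf_odd j' h2] at hjj
      exfalso
      have h3 := hrlt ⟨(j:ℕ)/2, half j⟩
      have h4 := hrlt ⟨(j':ℕ)/2, half j'⟩
      rw [hjj] at h3
      rw [hI.1] at h3
      exact absurd h3 (not_lt.2 h4.le)
    · rw [hσf_odd j h1, hσf_even j' h2] at hjj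
      exfalso
      have h3 := hrlt ⟨(j:ℕ)/2, half j⟩
      have h4 := hrlt ⟨(j':ℕ)/2, half j'⟩
      rw [← hjj] at h4
      rw [hI.1] at h4
      exact absurd h4 (not_lt.2 h3.le)
    · rw [hσf_odd j h1, hσf_odd j' h2] at hjj
      have h3 := congrArg Fin.val (hrinj (π.injective hjj))
      simp only [Fin.val_mk] at h3
      exact Fin.ext (by omega)
  have hbij : Function.Bijective σf := Finite.injective_iff_bijective.mp hσinj
  set σ : Equiv.Perm (Fin (2*k)) := Equiv.ofBijective σf hbij with hσdef
  have hσ : ∀ x, σ x = σf x := fun x => rfl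
  have hkeyf : ∀ j, σf (pairPerm k j) = π (σf j) := by
    intro j
    by_cases h1 : (j:ℕ) % 2 = 0
    · have hpv : ((pairPerm k j : Fin (2*k)) : ℕ) = (j:ℕ) + 1 := pairFn_val_even h1
      have h2 : ¬ ((pairPerm k j : Fin (2*k)) : ℕ) % 2 = 0 := by rw [hpv]; omega
      rw [hσf_odd _ h2, hσf_even j h1]
      exact congrArg (fun t => π (r t)) (Fin.ext (by simp only [Fin.val_mk]; rw [hpv]; omega))
    · have hpv : ((pairPerm k j : Fin (2*k)) : ℕ) = (j:ℕ) - 1 := pairFn_val_odd h1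
      have h2 : ((pairPerm k j : Fin (2*k)) : ℕ) % 2 = 0 := by rw [hpv]; omega
      rw [hσf_even _ h2, hσf_odd j h1, hI.1]
      exact congrArg r (Fin.ext (by simp only [Fin.val_mk]; rw [hpv]; omega))
  have hperm : σ * pairPerm k * σ⁻¹ = π := by
    refine Equiv.ext fun x => ?_
    show σ (pairPerm k (σ⁻¹ x)) = π x
    rw [hσ, hkeyf (σ⁻¹ x), ← hσ, Equiv.Perm.apply_inv_self]
  set b : Fin (2*k) → ℂ :=
    fun j => if (j:ℕ) % 2 = 0 then (1:ℂ) else a (σf j) * a₀ j with hb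
  have hbsgns : Sgns b := by
    intro j
    rw [hb]
    simp only
    by_cases h1 : (j:ℕ) % 2 = 0
    · rw [if_pos h1]; exact Or.inl rfl
    · rw [if_neg h1]
      rcases hsa (σf j) with h2 | h2 <;> rcases hs₀ j with h3 | h3 <;>
        rw [h2, h3] <;> norm_num
  have hbmul : ∀ j, b j * b j = 1 := fun j => sgns_mul_self (hbsgns j)
  have key2 : ∀ x, b (pairPerm k x) * a₀ x * b x = a (σf x) := by
    intro x
    by_cases h1 : (x:ℕ) % 2 = 0
    · have hpv : ((pairPerm k x : Fin (2*k)) : ℕ) = (x:ℕ) + 1 := pairFn_val_even h1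
      have h2 : ¬ ((pairPerm k x : Fin (2*k)) : ℕ) % 2 = 0 := by rw [hpv]; omega
      have hbx : b x = 1 := by rw [hb]; simp only; rw [if_pos h1]
      have hbp : b (pairPerm k x) = a (σf (pairPerm k x)) * a₀ (pairPerm k x) := by
        rw [hb]; simp only; rw [if_neg h2]
      rw [hbx, hbp, hkeyf x, hca (σf x), hc₀ x, mul_one, mul_assoc,
        sgns_mul_self (hs₀ x), mul_one]
    · have hpv : ((pairPerm k x : Fin (2*k)) : ℕ) = (x:ℕ) - 1 := pairFn_val_odd h1
      have h2 : ((pairPerm k x : Fin (2*k)) : ℕ) % 2 = 0 := by rw [hpv]; omega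
      have hbx : b x = a (σf x) * a₀ x := by rw [hb]; simp only; rw [if_neg h1]
      have hbp : b (pairPerm k x) = 1 := by rw [hb]; simp only; rw [if_pos h2]
      rw [hbx, hbp, one_mul]
      have h3 : a₀ x * (a (σf x) * a₀ x) = a (σf x) * (a₀ x * a₀ x) := by ring
      rw [h3, sgns_mul_self (hs₀ x), mul_one]
  have hPa : (∏ ρ ∈ reps (pairPerm k), a (σf ρ)) = ∏ x ∈ reps π, a x := by
    refine Finset.prod_bij (fun ρ _ => σf ρ) ?_ ?_ ?_ ?_
    · intro ρ hρ
      have he2 : (ρ:ℕ) % 2 = 0 := mem_reps_pair.1 hρ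
      show σf ρ ∈ reps π
      rw [hσf_even ρ he2]
      exact hrmem _
    · intro ρ1 h1 ρ2 h2 hq
      exact hσinj hq
    · intro x hx
      set t : Fin k := e.symm ⟨x, hx⟩ with ht
      have htk : 2 * (t:ℕ) < 2*k := by have := t.2; omega
      refine ⟨⟨2*(t:ℕ), htk⟩, mem_reps_pair.2 (by simp only [Fin.val_mk]; omega), ?_⟩
      show σf (⟨2*(t:ℕ), htk⟩ : Fin (2*k)) = x
      rw [hσf_even _ (by simp only [Fin.val_mk]; omega)]
      have h5 : (⟨(((⟨2*(t:ℕ), htk⟩ : Fin (2*k)) : ℕ))/2,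
          half ⟨2*(t:ℕ), htk⟩⟩ : Fin k) = t := Fin.ext (by simp only [Fin.val_mk]; omega)
      rw [h5, hr]
      simp only [ht, OrderIso.apply_symm_apply]
    · intro ρ hρ
      rfl
  have hbprod : (∏ j, b j) = 1 := by
    rw [prod_pairs isI_pair b]
    have hterm : ∀ ρ ∈ reps (pairPerm k), b ρ * b (pairPerm k ρ) = a (σf ρ) * a₀ ρ := by
      intro ρ hρ
      have he2 : (ρ:ℕ) % 2 = 0 := mem_reps_pair.1 hρ
      have h2 : ¬ ((pairPerm k ρ : Fin (2*k)) : ℕ) % 2 = 0 := by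
        rw [pairPerm_apply, pairFn_val_even he2]; omega
      have hbρ : b ρ = 1 := by rw [hb]; simp only; rw [if_pos he2]
      have hbp : b (pairPerm k ρ) = a (σf (pairPerm k ρ)) * a₀ (pairPerm k ρ) := by
        rw [hb]; simp only; rw [if_neg h2]
      rw [hbρ, hbp, one_mul, hkeyf ρ, hca (σf ρ), hc₀ ρ]
    rw [Finset.prod_congr rfl hterm, Finset.prod_mul_distrib, hPa, hprod]
    exact sgns_mul_self (sgns_prod hs₀ _)
  refine ⟨monoMat_mem_GSet hI hsa hca, monoMat (2*k) σ b,
    ⟨σ, b, fun i => by rw [pow_two]; exact hbmul i, by rw [hbprod]; norm_num, rfl⟩, ?_⟩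
  have hce := conj_eq σ (pairPerm k) b a₀ hbmul
  rw [hce]
  have hw : (fun j => b (pairPerm k (σ⁻¹ j)) * a₀ (σ⁻¹ j) * b (σ⁻¹ j)) = a := by
    funext j
    have h9 := key2 (σ⁻¹ j)
    rw [← hσ, Equiv.Perm.apply_inv_self] at h9
    exact h9
  rw [hperm, hw]

lemma conjClass_c2 : conjClass 2 2 (2*k) (c2Mat k) = ESet k 1 := by
  have hs₀ : Sgns (fun _ : Fin (2*k) => (1:ℂ)) := fun _ => Or.inl rfl
  have hc₀ : Cst (pairPerm k) (fun _ : Fin (2*k) => (1:ℂ)) := fun _ => rfl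
  have h := Set.Subset.antisymm (conjClass_subset_ESet hs₀ hc₀)
    (ESet_subset_conjClass hs₀ hc₀)
  rw [show (∏ ρ ∈ reps (pairPerm k), (fun _ : Fin (2*k) => (1:ℂ)) ρ) = 1 from
    Finset.prod_const_one] at h
  exact h

lemma conjClass_c1 (hk : 0 < k) : conjClass 2 2 (2*k) (c1Mat k) = ESet k (-1) := by
  have h := Set.Subset.antisymm (conjClass_subset_ESet (k := k) sgns_c1 cst_c1)
    (ESet_subset_conjClass (k := k) sgns_c1 cst_c1)
  rw [prod_reps_c1 hk] at h
  rw [c1Mat_eq]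
  exact h

end Stmt17C


section Stmt17D

open Equiv Finset

/-- `±1`-weights encoded by Boolean functions. -/
def wtB {m : ℕ} (a : Fin m → Bool) : Fin m → ℂ := fun i => if a i then -1 else 1

lemma sgns_wtB {m : ℕ} (a : Fin m → Bool) : Sgns (wtB a) := by
  intro i
  unfold wtB
  split_ifs
  · exact Or.inr rfl
  · exact Or.inl rfl

lemma wtB_ne_zero {m : ℕ} (a : Fin m → Bool) (i : Fin m) : wtB a i ≠ 0 := by
  rcases sgns_wtB a i with h | h <;> rw [h] <;> norm_num

/-- Parameter set: pairs (fixed-point-free involution, cycle-constant weight). -/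
def Dall (k : ℕ) : Finset (Equiv.Perm (Fin (2*k)) × (Fin (2*k) → Bool)) :=
  univ.filter fun p => IsI p.1 ∧ ∀ x, p.2 (p.1 x) = p.2 x

/-- Parameters with prescribed sign. -/
def Dsgn (k : ℕ) (s : ℂ) : Finset (Equiv.Perm (Fin (2*k)) × (Fin (2*k) → Bool)) :=
  (Dall k).filter fun p => (∏ ρ ∈ reps p.1, wtB p.2 ρ) = s

lemma ESet_eq_image {k : ℕ} (s : ℂ) :
    ESet k s = ↑((Dsgn k s).image fun p => monoMat (2*k) p.1 (wtB p.2)) := by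
  ext M
  constructor
  · rintro ⟨π, a, hI, hsa, hca, hprod, rfl⟩
    have hwa : wtB (fun i => decide (a i = -1)) = a := by
      funext i
      unfold wtB
      rcases hsa i with h1 | h1 <;> rw [h1] <;> norm_num <;> simp [h1] <;> norm_num
    refine Finset.mem_coe.2 (Finset.mem_image.2 ⟨⟨π, fun i => decide (a i = -1)⟩, ?_, ?_⟩)
    · rw [Dsgn, Finset.mem_filter]
      refine ⟨Finset.mem_filter.2 ⟨Finset.mem_univ _, hI, fun x => ?_⟩, ?_⟩
      · show decide (a (π x) = -1) = decide (a x = -1)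
        rw [hca x]
      · show (∏ ρ ∈ reps π, wtB (fun i => decide (a i = -1)) ρ) = s
        rw [hwa, hprod]
    · show monoMat (2*k) π (wtB fun i => decide (a i = -1)) = monoMat (2*k) π a
      rw [hwa]
  · intro hM
    obtain ⟨p, hp, rfl⟩ := Finset.mem_image.1 (Finset.mem_coe.1 hM)
    obtain ⟨hall, hsg⟩ := Finset.mem_filter.1 hp
    obtain ⟨-, hI, hcst⟩ := Finset.mem_filter.1 hall
    refine ⟨p.1, wtB p.2, hI, sgns_wtB _, fun x => ?_, hsg, rfl⟩
    unfold wtB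
    rw [hcst x]

lemma F_injOn {k : ℕ} (s : ℂ) :
    ∀ p ∈ Dsgn k s, ∀ q ∈ Dsgn k s,
      monoMat (2*k) p.1 (wtB p.2) = monoMat (2*k) q.1 (wtB q.2) → p = q := by
  intro p _ q _ h
  obtain ⟨h1, h2⟩ := monoMat_inj (wtB_ne_zero p.2) h
  refine Prod.ext h1 (funext fun x => ?_)
  have h3 := congrFun h2 x
  unfold wtB at h3
  cases hb : p.2 x <;> cases hb' : q.2 x <;> rw [hb, hb'] at h3 <;>
    simp only [if_true, if_false] at h3 <;> first | rfl | (exfalso; norm_num at h3)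

/-! kernelMap algebra -/

lemma kernelMap_sum {n t : ℕ} {ι : Type*} (s : Finset ι)
    (K : ι → ((Fin t → Fin n) → (Fin t → Fin n) → ℂ)) :
    ∑ x ∈ s, kernelMap n t (K x) = kernelMap n t (fun o i => ∑ x ∈ s, K x o i) := by
  refine LinearMap.ext fun f => ?_
  funext o
  rw [LinearMap.sum_apply, Finset.sum_apply]
  show ∑ x ∈ s, ∑ i : Fin t → Fin n, K x o i * f i
      = ∑ i : Fin t → Fin n, (∑ x ∈ s, K x o i) * f i
  rw [Finset.sum_comm]
  exact Finset.sum_congr rfl fun i _ => (Finset.sum_mul _ _ _).symm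

lemma kernelMap_sub {n t : ℕ} (K K' : (Fin t → Fin n) → (Fin t → Fin n) → ℂ) :
    kernelMap n t K - kernelMap n t K' = kernelMap n t (fun o i => K o i - K' o i) := by
  refine LinearMap.ext fun f => ?_
  funext o
  show (∑ i : Fin t → Fin n, K o i * f i) - ∑ i : Fin t → Fin n, K' o i * f i
      = ∑ i : Fin t → Fin n, (K o i - K' o i) * f i
  rw [← Finset.sum_sub_distrib]
  exact Finset.sum_congr rfl fun i _ => (sub_mul _ _ _).symm

lemma kernelMap_smul {n t : ℕ} (c : ℂ) (K : (Fin t → Fin n) → (Fin t → Fin n) → ℂ) :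
    c • kernelMap n t K = kernelMap n t (fun o i => c * K o i) := by
  refine LinearMap.ext fun f => ?_
  funext o
  show c * (∑ i : Fin t → Fin n, K o i * f i)
      = ∑ i : Fin t → Fin n, (c * K o i) * f i
  rw [Finset.mul_sum]
  exact Finset.sum_congr rfl fun i _ => (mul_assoc _ _ _).symm

end Stmt17D


section Stmt17E

open Equiv Finset

variable {k : ℕ}

/-- Number of `t` whose index `i t` lies in the cycle with representative `ρ`. -/
def mult (π : Equiv.Perm (Fin (2*k))) (i : Fin k → Fin (2*k)) (ρ : Fin (2*k)) : ℕ :=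
  (univ.filter fun t => repOf π (i t) = ρ).card

lemma inner_sum (π : Equiv.Perm (Fin (2*k))) (hI : IsI π) (i : Fin k → Fin (2*k)) :
    (∑ a ∈ univ.filter (fun a : Fin (2*k) → Bool => ∀ x, a (π x) = a x),
      (∏ ρ ∈ reps π, wtB a ρ) * ∏ t, wtB a (i t))
    = if ∀ ρ ∈ reps π, Odd (mult π i ρ) then (2:ℂ)^k else 0 := by
  have hcard : (reps π).card = k := by have := card_reps_aux hI; omega
  have hterm : ∀ a ∈ univ.filter (fun a : Fin (2*k) → Bool => ∀ x, a (π x) = a x),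
      (∏ ρ ∈ reps π, wtB a ρ) * (∏ t, wtB a (i t))
        = ∏ ρ ∈ reps π, (wtB a ρ)^(mult π i ρ + 1) := by
    intro a ha
    have hcst := (Finset.mem_filter.1 ha).2
    have hC : Cst π (wtB a) := fun x => by unfold wtB; rw [hcst x]
    have h1 : (∏ t, wtB a (i t)) = ∏ t, wtB a (repOf π (i t)) :=
      Finset.prod_congr rfl fun t _ => (cst_repOf hC (i t)).symm
    have h2 : (∏ t, wtB a (repOf π (i t)))
        = ∏ ρ ∈ univ.image (fun t => repOf π (i t)), (wtB a ρ)^(mult π i ρ) :=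
      Finset.prod_comp (wtB a) (fun t => repOf π (i t))
    have h3 : (∏ ρ ∈ univ.image (fun t => repOf π (i t)), (wtB a ρ)^(mult π i ρ))
        = ∏ ρ ∈ reps π, (wtB a ρ)^(mult π i ρ) := by
      refine Finset.prod_subset ?_ ?_
      · intro ρ hρ
        obtain ⟨t, -, rfl⟩ := Finset.mem_image.1 hρ
        exact repOf_mem hI (i t)
      · intro ρ hρ hnot
        have h0 : mult π i ρ = 0 := by
          rw [mult, Finset.card_eq_zero, Finset.filter_eq_empty_iff]
          intro t _
          exact fun h => hnot (Finset.mem_image.2 ⟨t, Finset.mem_univ t, h⟩)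
        rw [h0, pow_zero]
    rw [h1, h2, h3, ← Finset.prod_mul_distrib]
    refine Finset.prod_congr rfl fun ρ _ => ?_
    rw [pow_succ]
    ring
  rw [Finset.sum_congr rfl hterm]
  have hbij : (∑ a ∈ univ.filter (fun a : Fin (2*k) → Bool => ∀ x, a (π x) = a x),
      ∏ ρ ∈ reps π, (wtB a ρ)^(mult π i ρ + 1))
      = ∑ S ∈ (reps π).powerset,
          ∏ ρ ∈ reps π, ((if ρ ∈ S then (-1:ℂ) else 1))^(mult π i ρ + 1) := by
    refine Finset.sum_nbij' (fun a => (reps π).filter (fun ρ => a ρ = true))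
      (fun S => fun x => decide (repOf π x ∈ S)) ?_ ?_ ?_ ?_ ?_
    · intro a _
      exact Finset.mem_powerset.2 (Finset.filter_subset _ _)
    · intro S _
      refine Finset.mem_filter.2 ⟨Finset.mem_univ _, fun x => ?_⟩
      show decide (repOf π (π x) ∈ S) = decide (repOf π x ∈ S)
      rw [repOf_apply hI]
    · intro a ha
      have hcst := (Finset.mem_filter.1 ha).2
      funext x
      show decide (repOf π x ∈ (reps π).filter (fun ρ => a ρ = true)) = a x
      have hax : a (repOf π x) = a x := by
        rcases repOf_cases π x with h1 | h1 <;> rw [h1]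
        · exact hcst x
      simp only [Finset.mem_filter, repOf_mem hI x, true_and, hax]
      cases h : a x <;> simp
    · intro S hS
      have hsub := Finset.mem_powerset.1 hS
      show (reps π).filter (fun ρ => decide (repOf π ρ ∈ S) = true) = S
      ext ρ
      simp only [Finset.mem_filter, decide_eq_true_eq]
      constructor
      · rintro ⟨hρ, hmem⟩
        rwa [repOf_of_mem hρ] at hmem
      · intro hρS
        have hρ : ρ ∈ reps π := hsub hρS
        exact ⟨hρ, by rwa [repOf_of_mem hρ]⟩
    · intro a ha
      refine Finset.prod_congr rfl fun ρ hρ => ?_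
      congr 1
      show wtB a ρ = if ρ ∈ (reps π).filter (fun ρ' => a ρ' = true) then (-1:ℂ) else 1
      unfold wtB
      by_cases hmem : a ρ = true
      · rw [if_pos hmem, if_pos (Finset.mem_filter.2 ⟨hρ, hmem⟩)]
      · rw [if_neg hmem, eq_comm, ite_eq_right_iff]
        intro hc
        exact absurd (Finset.mem_filter.1 hc).2 hmem
  rw [hbij]
  have hps : ∀ S ∈ (reps π).powerset,
      (∏ ρ ∈ reps π, ((if ρ ∈ S then (-1:ℂ) else 1))^(mult π i ρ + 1))
      = ∏ ρ ∈ S, (-1:ℂ)^(mult π i ρ + 1) := by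
    intro S hS
    have hsub := Finset.mem_powerset.1 hS
    rw [← Finset.prod_sdiff hsub]
    have h1 : (∏ ρ ∈ reps π \ S, ((if ρ ∈ S then (-1:ℂ) else 1))^(mult π i ρ + 1)) = 1 :=
      Finset.prod_eq_one fun ρ hρ => by
        rw [if_neg (Finset.mem_sdiff.1 hρ).2, one_pow]
    have h2 : ∀ ρ ∈ S, ((if ρ ∈ S then (-1:ℂ) else 1))^(mult π i ρ + 1)
        = (-1:ℂ)^(mult π i ρ + 1) := fun ρ hρ => by rw [if_pos hρ]
    rw [h1, one_mul, Finset.prod_congr rfl h2]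
  rw [Finset.sum_congr rfl hps]
  have hpa : (∑ S ∈ (reps π).powerset, ∏ ρ ∈ S, (-1:ℂ)^(mult π i ρ + 1))
      = ∏ ρ ∈ reps π, ((-1:ℂ)^(mult π i ρ + 1) + 1) := by
    rw [Finset.prod_add]
    refine Finset.sum_congr rfl fun S _ => ?_
    rw [Finset.prod_const_one, mul_one]
  rw [hpa]
  by_cases hodd : ∀ ρ ∈ reps π, Odd (mult π i ρ)
  · rw [if_pos hodd]
    have h5 : ∀ ρ ∈ reps π, ((-1:ℂ)^(mult π i ρ + 1) + 1) = 2 := by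
      intro ρ hρ
      rw [Even.neg_one_pow (Odd.add_one (hodd ρ hρ))]
      norm_num
    rw [Finset.prod_congr rfl h5, Finset.prod_const, hcard]
  · rw [if_neg hodd]
    push_neg at hodd
    obtain ⟨ρ, hρ, hev⟩ := hodd
    refine Finset.prod_eq_zero hρ ?_
    rw [Odd.neg_one_pow (Even.add_one (Nat.not_odd_iff_even.1 hev))]
    ring

lemma good_inj {π : Equiv.Perm (Fin (2*k))} (hI : IsI π) {i o : Fin k → Fin (2*k)}
    (hcond : ∀ t, o t = π (i t)) (hodd : ∀ ρ ∈ reps π, Odd (mult π i ρ)) :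
    Function.Injective (Sum.elim i o) := by
  have hcard : (reps π).card = k := by have := card_reps_aux hI; omega
  have hsum : ∑ ρ ∈ reps π, mult π i ρ = k := by
    have h := Finset.card_eq_sum_card_fiberwise
      (f := fun t : Fin k => repOf π (i t)) (s := univ) (t := reps π)
      (fun t _ => repOf_mem hI (i t))
    rw [Finset.card_univ, Fintype.card_fin] at h
    exact h.symm
  have hone : ∀ ρ ∈ reps π, mult π i ρ = 1 := by
    have hle : ∀ ρ ∈ reps π, 1 ≤ mult π i ρ := by
      intro ρ hρ
      obtain ⟨c, hc⟩ := hodd ρ hρ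
      omega
    have hs2 : (∑ ρ ∈ reps π, (1:ℕ)) = ∑ ρ ∈ reps π, mult π i ρ := by
      rw [hsum, Finset.sum_const, smul_eq_mul, mul_one, hcard]
    intro ρ hρ
    exact ((Finset.sum_eq_sum_iff_of_le hle).1 hs2 ρ hρ).symm
  have hψ : ∀ t t', repOf π (i t) = repOf π (i t') → t = t' := by
    intro t t' h
    have hρ := repOf_mem hI (i t)
    have h1 := hone _ hρ
    rw [mult, Finset.card_eq_one] at h1
    obtain ⟨u, hu⟩ := h1
    have ht : t ∈ univ.filter fun t'' => repOf π (i t'') = repOf π (i t) :=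
      Finset.mem_filter.2 ⟨Finset.mem_univ _, rfl⟩
    have ht' : t' ∈ univ.filter fun t'' => repOf π (i t'') = repOf π (i t) :=
      Finset.mem_filter.2 ⟨Finset.mem_univ _, h.symm⟩
    rw [hu, Finset.mem_singleton] at ht ht'
    rw [ht, ht']
  intro x y hxy
  rcases x with t | t <;> rcases y with t' | t'
  · have h1 : i t = i t' := hxy
    rw [hψ t t' (by rw [h1])]
  · exfalso
    have h1 : i t = o t' := hxy
    have h2 : repOf π (i t) = repOf π (i t') := by
      rw [h1, hcond t', repOf_apply hI]
    have h3 := hψ t t' h2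
    rw [h3] at h1
    rw [hcond t'] at h1
    exact hI.2 (i t') h1.symm
  · exfalso
    have h1 : o t = i t' := hxy
    have h2 : repOf π (i t') = repOf π (i t) := by
      rw [← h1, hcond t, repOf_apply hI]
    have h3 := hψ t' t h2
    rw [h3] at h1
    rw [hcond t] at h1
    exact hI.2 (i t) h1
  · have h1 : o t = o t' := hxy
    rw [hcond t, hcond t'] at h1
    rw [hψ t t' (by rw [π.injective h1])]

lemma good_unique {π : Equiv.Perm (Fin (2*k))} (hI : IsI π) {i o : Fin k → Fin (2*k)}
    (hcond : ∀ t, o t = π (i t)) (hsurj : Function.Surjective (Sum.elim i o))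
    {π' : Equiv.Perm (Fin (2*k))} (hI' : IsI π') (hcond' : ∀ t, o t = π' (i t)) :
    π = π' := by
  refine Equiv.ext fun x => ?_
  obtain ⟨y, rfl⟩ := hsurj x
  rcases y with t | t
  · show π (i t) = π' (i t)
    rw [← hcond t, ← hcond' t]
  · show π (o t) = π' (o t)
    have h1 : π (o t) = i t := by rw [hcond t, hI.1]
    have h2 : π' (o t) = i t := by rw [hcond' t, hI'.1]
    rw [h1, h2]

lemma exists_good {i o : Fin k → Fin (2*k)} (hinj : Function.Injective (Sum.elim i o)) :
    ∃ π : Equiv.Perm (Fin (2*k)), IsI π ∧ (∀ t, o t = π (i t)) ∧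
      (∀ ρ ∈ reps π, Odd (mult π i ρ)) ∧ Function.Surjective (Sum.elim i o) := by
  have hcards : Fintype.card (Fin k ⊕ Fin k) = Fintype.card (Fin (2*k)) := by
    simp [Fintype.card_sum]
    omega
  have hbij : Function.Bijective (Sum.elim i o) :=
    (Fintype.bijective_iff_injective_and_card _).2 ⟨hinj, hcards⟩
  set eqv := Equiv.ofBijective _ hbij with heqv
  set π : Equiv.Perm (Fin (2*k)) :=
    ((eqv.symm.trans (Equiv.sumComm (Fin k) (Fin k))).trans eqv) with hπ
  have hπap : ∀ x, π x = eqv ((eqv.symm x).swap) := fun x => rfl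
  have hIπ : IsI π := by
    constructor
    · intro x
      rw [hπap, hπap, Equiv.symm_apply_apply, Sum.swap_swap, Equiv.apply_symm_apply]
    · intro x hx
      rw [hπap] at hx
      have h2 : (eqv.symm x).swap = eqv.symm x := by
        have h3 := congrArg eqv.symm hx
        rwa [Equiv.symm_apply_apply] at h3
      rcases h3 : eqv.symm x with t | t <;> rw [h3] at h2 <;> simp at h2
  have hcond : ∀ t, o t = π (i t) := by
    intro t
    have h4 : i t = eqv (Sum.inl t) := rfl
    rw [hπap, h4, Equiv.symm_apply_apply]
    rfl
  refine ⟨π, hIπ, hcond, ?_, hbij.2⟩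
  intro ρ hρ
  have hψinj : ∀ t1 t2, repOf π (i t1) = repOf π (i t2) → t1 = t2 := by
    have hmem2 : ∀ t : Fin k, repOf π (i t) = Sum.elim i o (Sum.inl t) ∨
        repOf π (i t) = Sum.elim i o (Sum.inr t) := by
      intro t
      rcases repOf_cases π (i t) with h2 | h2
      · exact Or.inl h2
      · right
        rw [h2, ← hcond t]
        rfl
    intro t1 t2 h
    rcases hmem2 t1 with h1 | h1 <;> rcases hmem2 t2 with h2 | h2
    · have h5 := hinj (h1 ▸ h2 ▸ h)
      exact Sum.inl_injective h5
    · have h5 := hinj (h1 ▸ h2 ▸ h)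
      exact absurd h5 (by simp)
    · have h5 := hinj (h1 ▸ h2 ▸ h)
      exact absurd h5 (by simp)
    · have h5 := hinj (h1 ▸ h2 ▸ h)
      exact Sum.inr_injective h5
  have ht0 : ∃ t, repOf π (i t) = ρ := by
    obtain ⟨y, hy⟩ := hbij.2 ρ
    rcases y with t | t
    · refine ⟨t, ?_⟩
      have h6 : i t = ρ := hy
      rw [h6, repOf_of_mem hρ]
    · refine ⟨t, ?_⟩
      have h6 : o t = ρ := hy
      rw [← repOf_apply hIπ, ← hcond t, h6, repOf_of_mem hρ]
  obtain ⟨t0, ht0⟩ := ht0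
  have hft : univ.filter (fun t => repOf π (i t) = ρ) = {t0} := by
    ext t'
    simp only [Finset.mem_filter, Finset.mem_univ, true_and, Finset.mem_singleton]
    constructor
    · intro h'
      exact hψinj t' t0 (by rw [h', ht0])
    · rintro rfl
      exact ht0
  rw [mult, hft, Finset.card_singleton]
  exact odd_one

end Stmt17E


section Stmt17F

open Equiv Finset

variable {k : ℕ}

lemma key_kernel (o i : Fin k → Fin (2*k)) :
    (∑ p ∈ Dsgn k 1, ∏ t, monoMat (2*k) p.1 (wtB p.2) (o t) (i t))
      - ∑ p ∈ Dsgn k (-1), ∏ t, monoMat (2*k) p.1 (wtB p.2) (o t) (i t)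
      = 2^k * coeX (2*k) k (singletonSP k) (Sum.elim i o) := by
  set T : (Equiv.Perm (Fin (2*k)) × (Fin (2*k) → Bool)) → ℂ :=
    fun p => ∏ t, monoMat (2*k) p.1 (wtB p.2) (o t) (i t) with hT
  have hDneg : (Dall k).filter (fun p => ¬ ((∏ ρ ∈ reps p.1, wtB p.2 ρ) = 1))
      = Dsgn k (-1) := by
    rw [Dsgn]
    refine Finset.filter_congr fun p _ => ?_
    rcases sgns_prod (sgns_wtB p.2) (reps p.1) with h1 | h1 <;> rw [h1] <;> norm_num
  have hsplit : (∑ p ∈ Dsgn k 1, T p) - (∑ p ∈ Dsgn k (-1), T p)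
      = ∑ p ∈ Dall k, (∏ ρ ∈ reps p.1, wtB p.2 ρ) * T p := by
    rw [← Finset.sum_filter_add_sum_filter_not (Dall k)
      (fun p => (∏ ρ ∈ reps p.1, wtB p.2 ρ) = 1)
      (fun p => (∏ ρ ∈ reps p.1, wtB p.2 ρ) * T p), hDneg]
    have e1 : (∑ p ∈ (Dall k).filter (fun p => (∏ ρ ∈ reps p.1, wtB p.2 ρ) = 1),
        (∏ ρ ∈ reps p.1, wtB p.2 ρ) * T p) = ∑ p ∈ Dsgn k 1, T p := by
      refine Finset.sum_congr rfl fun p hp => ?_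
      rw [(Finset.mem_filter.1 hp).2, one_mul]
    have e2 : (∑ p ∈ Dsgn k (-1), (∏ ρ ∈ reps p.1, wtB p.2 ρ) * T p)
        = - ∑ p ∈ Dsgn k (-1), T p := by
      rw [← Finset.sum_neg_distrib]
      refine Finset.sum_congr rfl fun p hp => ?_
      rw [(Finset.mem_filter.1 hp).2, neg_one_mul]
    rw [e1, e2, ← sub_eq_add_neg]
  have hT2 : ∀ p : Equiv.Perm (Fin (2*k)) × (Fin (2*k) → Bool),
      T p = (if (∀ t, o t = p.1 (i t)) then ∏ t, wtB p.2 (i t) else 0) := by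
    intro p
    rw [hT]
    by_cases hcond : ∀ t, o t = p.1 (i t)
    · rw [if_pos hcond]
      exact Finset.prod_congr rfl fun t _ => by rw [monoMat_apply, if_pos (hcond t)]
    · rw [if_neg hcond]
      push_neg at hcond
      obtain ⟨t, ht⟩ := hcond
      exact Finset.prod_eq_zero (Finset.mem_univ t) (by rw [monoMat_apply, if_neg ht])
  have hdouble : (∑ p ∈ Dall k, (∏ ρ ∈ reps p.1, wtB p.2 ρ) * T p)
      = ∑ π ∈ univ.filter (fun π : Equiv.Perm (Fin (2*k)) => IsI π),
          (if (∀ t, o t = π (i t)) then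
            (∑ a ∈ univ.filter (fun a : Fin (2*k) → Bool => ∀ x, a (π x) = a x),
              (∏ ρ ∈ reps π, wtB a ρ) * ∏ t, wtB a (i t)) else 0) := by
    rw [Dall, Finset.sum_filter, Fintype.sum_prod_type, Finset.sum_filter]
    refine Finset.sum_congr rfl fun π _ => ?_
    by_cases hπ : IsI π
    · rw [if_pos hπ]
      by_cases hcond : ∀ t, o t = π (i t)
      · rw [if_pos hcond, Finset.sum_filter]
        refine Finset.sum_congr rfl fun a _ => ?_
        by_cases hc : ∀ x, a (π x) = a x
        · rw [if_pos (show IsI (π,a).1 ∧ ∀ x, (π,a).2 ((π,a).1 x) = (π,a).2 x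
              from ⟨hπ, hc⟩), if_pos hc, hT2, if_pos hcond]
        · rw [if_neg (show ¬ (IsI (π,a).1 ∧ ∀ x, (π,a).2 ((π,a).1 x) = (π,a).2 x)
              from fun h => hc h.2), if_neg hc]
      · rw [if_neg hcond]
        refine Finset.sum_eq_zero fun a _ => ?_
        by_cases hc : ∀ x, a (π x) = a x
        · rw [if_pos (show IsI (π,a).1 ∧ ∀ x, (π,a).2 ((π,a).1 x) = (π,a).2 x
              from ⟨hπ, hc⟩), hT2, if_neg hcond, mul_zero]
        · rw [if_neg (show ¬ (IsI (π,a).1 ∧ ∀ x, (π,a).2 ((π,a).1 x) = (π,a).2 x)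
              from fun h => hc h.2)]
    · rw [if_neg hπ]
      refine Finset.sum_eq_zero fun a _ => ?_
      rw [if_neg (show ¬ (IsI (π,a).1 ∧ ∀ x, (π,a).2 ((π,a).1 x) = (π,a).2 x)
          from fun h => hπ h.1)]
  have hmerge : (∑ π ∈ univ.filter (fun π : Equiv.Perm (Fin (2*k)) => IsI π),
          (if (∀ t, o t = π (i t)) then
            (∑ a ∈ univ.filter (fun a : Fin (2*k) → Bool => ∀ x, a (π x) = a x),
              (∏ ρ ∈ reps π, wtB a ρ) * ∏ t, wtB a (i t)) else 0))
      = ∑ π ∈ univ.filter (fun π : Equiv.Perm (Fin (2*k)) => IsI π),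
          (if ((∀ t, o t = π (i t)) ∧ ∀ ρ ∈ reps π, Odd (mult π i ρ))
            then (2:ℂ)^k else 0) := by
    refine Finset.sum_congr rfl fun π hπ => ?_
    have hI : IsI π := (Finset.mem_filter.1 hπ).2
    by_cases hcond : ∀ t, o t = π (i t)
    · rw [if_pos hcond, inner_sum π hI i]
      by_cases hodd : ∀ ρ ∈ reps π, Odd (mult π i ρ)
      · rw [if_pos hodd, if_pos ⟨hcond, hodd⟩]
      · rw [if_neg hodd, if_neg (fun h => hodd h.2)]
    · rw [if_neg hcond, if_neg (fun h => hcond h.1)]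
  rw [hsplit, hdouble, hmerge, ← Finset.sum_filter]
  have hcoe : coeX (2*k) k (singletonSP k) (Sum.elim i o)
      = if Function.Injective (Sum.elim i o) then 1 else 0 := by
    rw [coeX]
    by_cases hinj : Function.Injective (Sum.elim i o)
    · rw [if_pos hinj, if_pos]
      intro a b
      exact ⟨fun hr => congrArg (Sum.elim i o) hr, fun he => hinj he⟩
    · rw [if_neg, if_neg hinj]
      intro hcond
      exact hinj fun a b he => (hcond a b).2 he
  rw [hcoe]
  by_cases hinj : Function.Injective (Sum.elim i o)
  · obtain ⟨π₀, hI₀, hcond₀, hodd₀, hsurj⟩ := exists_good hinj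
    have hset : (univ.filter (fun π : Equiv.Perm (Fin (2*k)) => IsI π)).filter
        (fun π => (∀ t, o t = π (i t)) ∧ ∀ ρ ∈ reps π, Odd (mult π i ρ)) = {π₀} := by
      ext π
      simp only [Finset.mem_filter, Finset.mem_univ, true_and, Finset.mem_singleton]
      constructor
      · rintro ⟨hI, hcond, hodd⟩
        exact good_unique hI hcond hsurj hI₀ hcond₀
      · rintro rfl
        exact ⟨hI₀, hcond₀, hodd₀⟩
    rw [hset, Finset.sum_singleton, if_pos hinj, mul_one]
  · rw [if_neg hinj, mul_zero]
    refine Finset.sum_eq_zero fun π hπ => ?_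
    obtain ⟨hmem, hcond, hodd⟩ := Finset.mem_filter.1 hπ
    exact absurd (good_inj (Finset.mem_filter.1 hmem).2 hcond hodd) hinj

end Stmt17F

/-- Let `C₁, C₂` be the conjugacy classes of `c₁, c₂` in
`G(2,2,2k)`.  Then, as endomorphisms of `(ℂ^{2k})^{⊗k}`,
`Σ_{g ∈ C₂} g^{⊗k} − Σ_{g ∈ C₁} g^{⊗k} = 2^k • M_{k,2,2}`. -/
theorem statement17 (k : ℕ) (hk : 0 < k) :
    (∑ᶠ g ∈ conjClass 2 2 (2 * k) (c2Mat k), tensorPow (2 * k) k g)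
      - (∑ᶠ g ∈ conjClass 2 2 (2 * k) (c1Mat k), tensorPow (2 * k) k g)
      = (2 ^ k : ℂ) • Mop k := by
  rw [conjClass_c2, conjClass_c1 hk, ESet_eq_image 1, ESet_eq_image (-1),
    finsum_mem_coe_finset, finsum_mem_coe_finset,
    Finset.sum_image (F_injOn 1), Finset.sum_image (F_injOn (-1))]
  have hL : ∀ s : ℂ,
      (∑ p ∈ Dsgn k s, tensorPow (2*k) k (monoMat (2*k) p.1 (wtB p.2)))
      = kernelMap (2*k) k (fun o i => ∑ p ∈ Dsgn k s,
          ∏ t, monoMat (2*k) p.1 (wtB p.2) (o t) (i t)) := fun s =>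
    kernelMap_sum (Dsgn k s) (fun p o i => ∏ t, monoMat (2*k) p.1 (wtB p.2) (o t) (i t))
  rw [hL 1, hL (-1), kernelMap_sub]
  have hR : (2 ^ k : ℂ) • Mop k = kernelMap (2*k) k
      (fun o i => 2^k * coeX (2*k) k (singletonSP k) (Sum.elim i o)) :=
    kernelMap_smul (2^k : ℂ) (fun o i => coeX (2*k) k (singletonSP k) (Sum.elim i o))
  rw [hR]
  congr 1
  funext o i
  exact key_kernel o i

end Tanabe
end
end
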